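/- arXiv:1302.4506 — 5 statements merged into one kernel-verified Lean document; each statement's English description precedes it below -/
import Mathlib

section
/- Let n ≥ 1 and let x, y ∈ [0,∞)^n, and fix an integer r ≥ 1. Suppose that F_{k,r}(x) ≤ F_{k,r}(y) for all integers k with r ≤ k ≤ nr. Then ‖x‖_p ≤ ‖y‖_p for every real p with 0 ≤ p ≤ 1. -/
open scoped BigOperators

/-- The `p`-norm `((1/n) Σ xᵢ^p)^(1/p)` for `p ≠ 0`, and the geometric mean
`(Π xᵢ)^(1/n)` for `p = 0`. -/
noncomputable def pNorm {n : ℕ} (p : ℝ) (x : Fin n → ℝ) : ℝ :=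
  if p = 0 then (∏ i, x i) ^ ((n : ℝ)⁻¹)
  else ((n : ℝ)⁻¹ * ∑ i, x i ^ p) ^ p⁻¹

/-- `Fcoeff n r k x` is the coefficient of `t^k` in `Π_{i=1}^n P_r (x_i t)`, where
`P_r(s) = Σ_{j=0}^r s^j / j!` is the `r`-th Taylor polynomial of `e^s`. -/
noncomputable def Fcoeff (n r k : ℕ) (x : Fin n → ℝ) : ℝ :=
  Polynomial.coeff
    (∏ i, ∑ j ∈ Finset.range (r + 1),
      Polynomial.C ((x i) ^ j / (Nat.factorial j : ℝ)) * Polynomial.X ^ j) k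

namespace PNormAux

open Polynomial MeasureTheory Set

noncomputable def Pr (r : ℕ) (s : ℝ) : ℝ :=
  ∑ j ∈ Finset.range (r + 1), s ^ j / (Nat.factorial j : ℝ)

noncomputable def T (r : ℕ) (c : ℝ) : Polynomial ℝ :=
  ∑ j ∈ Finset.range (r + 1),
    Polynomial.C (c ^ j / (Nat.factorial j : ℝ)) * Polynomial.X ^ j

noncomputable def lP (r : ℕ) (s : ℝ) : ℝ := Real.log (Pr r s)

lemma coeff_T (r : ℕ) (c : ℝ) (b : ℕ) :
    (T r c).coeff b = if b ≤ r then c ^ b / (Nat.factorial b : ℝ) else 0 := by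
  simp only [T, Polynomial.finset_sum_coeff, Polynomial.coeff_C_mul, Polynomial.coeff_X_pow,
    mul_ite, mul_one, mul_zero]
  rw [Finset.sum_ite_eq (Finset.range (r + 1)) b]
  simp [Nat.lt_succ_iff]

lemma natDegree_T_le (r : ℕ) (c : ℝ) : (T r c).natDegree ≤ r := by
  rw [Polynomial.natDegree_le_iff_coeff_eq_zero]
  intro m hm
  rw [coeff_T, if_neg (by omega)]

lemma eval_T (r : ℕ) (c t : ℝ) : (T r c).eval t = Pr r (c * t) := by
  simp only [T, Pr, Polynomial.eval_finset_sum, Polynomial.eval_mul, Polynomial.eval_C,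
    Polynomial.eval_pow, Polynomial.eval_X, mul_pow]
  exact Finset.sum_congr rfl fun j _ => by ring

lemma sum_antidiagonal_pow (u v : ℝ) (k : ℕ) :
    ∑ q ∈ Finset.HasAntidiagonal.antidiagonal k,
        u ^ q.1 / (Nat.factorial q.1 : ℝ) * (v ^ q.2 / (Nat.factorial q.2 : ℝ))
      = (u + v) ^ k / (Nat.factorial k : ℝ) := by
  rw [add_pow, Finset.Nat.sum_antidiagonal_eq_sum_range_succ_mk, Finset.sum_div]
  refine Finset.sum_congr rfl fun m hm => ?_
  have hmk : m ≤ k := Nat.lt_succ_iff.mp (Finset.mem_range.mp hm)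
  have h1 : (Nat.factorial m : ℝ) ≠ 0 := Nat.cast_ne_zero.mpr (Nat.factorial_ne_zero m)
  have h2 : (Nat.factorial (k - m) : ℝ) ≠ 0 := Nat.cast_ne_zero.mpr (Nat.factorial_ne_zero _)
  have h3 : (Nat.factorial k : ℝ) ≠ 0 := Nat.cast_ne_zero.mpr (Nat.factorial_ne_zero k)
  have key : ((k.choose m : ℝ)) * (Nat.factorial m : ℝ) * (Nat.factorial (k - m) : ℝ)
      = (Nat.factorial k : ℝ) := by
    exact_mod_cast congrArg (Nat.cast (R := ℝ)) (Nat.choose_mul_factorial_mul_factorial hmk)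
  field_simp
  linear_combination (-(u ^ m * v ^ (k - m))) * key

lemma coeff_prod_T {ι : Type*} [DecidableEq ι] (r : ℕ) (x : ι → ℝ) (s : Finset ι) :
    ∀ k : ℕ, k ≤ r →
      (∏ i ∈ s, T r (x i)).coeff k = (∑ i ∈ s, x i) ^ k / (Nat.factorial k : ℝ) := by
  induction s using Finset.induction with
  | empty =>
    intro k hk
    rcases k with _ | k
    · simp
    · simp [Polynomial.coeff_one]
  | @insert a s ha IH =>
    intro k hk
    rw [Finset.prod_insert ha, Polynomial.coeff_mul, Finset.sum_insert ha]
    have : ∀ q ∈ Finset.HasAntidiagonal.antidiagonal k,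
        (T r (x a)).coeff q.1 * (∏ i ∈ s, T r (x i)).coeff q.2
          = x a ^ q.1 / (Nat.factorial q.1 : ℝ)
            * ((∑ i ∈ s, x i) ^ q.2 / (Nat.factorial q.2 : ℝ)) := by
      intro q hq
      have hq' := Finset.HasAntidiagonal.mem_antidiagonal.mp hq
      have h1 : q.1 ≤ r := le_trans (by omega) hk
      have h2 : q.2 ≤ r := le_trans (by omega) hk
      rw [coeff_T, if_pos h1, IH q.2 h2]
    rw [Finset.sum_congr rfl this, sum_antidiagonal_pow]

lemma natDegree_prod_T_le {ι : Type*} (r : ℕ) (x : ι → ℝ) (s : Finset ι) :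
    (∏ i ∈ s, T r (x i)).natDegree ≤ s.card * r :=
  le_trans (Polynomial.natDegree_prod_le s fun i => T r (x i))
    (by calc ∑ i ∈ s, (T r (x i)).natDegree ≤ ∑ _i ∈ s, r :=
            Finset.sum_le_sum fun i _ => natDegree_T_le r (x i)
         _ = s.card * r := by rw [Finset.sum_const, smul_eq_mul])

lemma coeff_prod_T_top {ι : Type*} [DecidableEq ι] (r : ℕ) (x : ι → ℝ) (s : Finset ι) :
    (∏ i ∈ s, T r (x i)).coeff (s.card * r)
      = ∏ i ∈ s, (x i ^ r / (Nat.factorial r : ℝ)) := by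
  induction s using Finset.induction with
  | empty => simp
  | @insert a s ha IH =>
    rw [Finset.prod_insert ha, Finset.card_insert_of_notMem ha]
    have hcard : (s.card + 1) * r = r + s.card * r := by ring
    rw [hcard, Polynomial.coeff_mul_add_eq_of_natDegree_le (natDegree_T_le r (x a))
      (natDegree_prod_T_le r x s), coeff_T, if_pos le_rfl, IH, Finset.prod_insert ha]


lemma one_le_Pr (r : ℕ) {s : ℝ} (hs : 0 ≤ s) : 1 ≤ Pr r s := by
  have h := Finset.single_le_sum (f := fun j => s ^ j / (Nat.factorial j : ℝ))
    (fun j _ => by positivity) (Finset.mem_range.mpr (Nat.succ_pos r))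
  simpa [Pr] using h

lemma Pr_pos (r : ℕ) {s : ℝ} (hs : 0 ≤ s) : 0 < Pr r s :=
  lt_of_lt_of_le one_pos (one_le_Pr r hs)

lemma add_one_le_Pr {r : ℕ} (hr : 1 ≤ r) {s : ℝ} (hs : 0 ≤ s) : 1 + s ≤ Pr r s := by
  have hsub : Finset.range 2 ⊆ Finset.range (r + 1) := Finset.range_subset_range.mpr (by omega)
  have h := Finset.sum_le_sum_of_subset_of_nonneg hsub
    (f := fun j => s ^ j / (Nat.factorial j : ℝ)) (fun j _ _ => by positivity)
  calc 1 + s = ∑ j ∈ Finset.range 2, s ^ j / (Nat.factorial j : ℝ) := by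
        simp [Finset.sum_range_succ]
    _ ≤ Pr r s := h

lemma Pr_le_exp (r : ℕ) {s : ℝ} (hs : 0 ≤ s) : Pr r s ≤ Real.exp s :=
  Real.sum_le_exp_of_nonneg hs (r + 1)

lemma Pr_zero (r : ℕ) : Pr r 0 = 1 := by
  rw [Pr, Finset.sum_range_succ']
  simp

lemma continuous_Pr (r : ℕ) : Continuous (Pr r) := by
  apply continuous_finset_sum
  intro j _
  exact (continuous_pow j).div_const _

lemma lP_zero (r : ℕ) : lP r 0 = 0 := by simp [lP, Pr_zero]

lemma lP_nonneg (r : ℕ) {s : ℝ} (hs : 0 ≤ s) : 0 ≤ lP r s :=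
  Real.log_nonneg (one_le_Pr r hs)

lemma lP_le (r : ℕ) {s : ℝ} (hs : 0 ≤ s) : lP r s ≤ s := by
  have := Real.log_le_log (Pr_pos r hs) (Pr_le_exp r hs)
  simpa [lP, Real.log_exp] using this

lemma log_two_le_lP {r : ℕ} (hr : 1 ≤ r) {s : ℝ} (hs : 1 ≤ s) : Real.log 2 ≤ lP r s := by
  apply Real.log_le_log two_pos
  calc (2 : ℝ) = 1 + 1 := by norm_num
    _ ≤ 1 + s := by linarith
    _ ≤ Pr r s := add_one_le_Pr hr (by linarith)

lemma Pr_le_poly (r : ℕ) {s : ℝ} (hs : 1 ≤ s) : Pr r s ≤ (r + 1 : ℝ) * s ^ r := by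
  have : ∀ j ∈ Finset.range (r + 1), s ^ j / (Nat.factorial j : ℝ) ≤ s ^ r := by
    intro j hj
    have hj' : j ≤ r := Nat.lt_succ_iff.mp (Finset.mem_range.mp hj)
    have h1 : s ^ j / (Nat.factorial j : ℝ) ≤ s ^ j := by
      apply div_le_self (by positivity)
      exact_mod_cast Nat.one_le_iff_ne_zero.mpr (Nat.factorial_ne_zero j)
    exact h1.trans (pow_le_pow_right₀ (by linarith) hj')
  calc Pr r s ≤ ∑ _j ∈ Finset.range (r + 1), s ^ r := Finset.sum_le_sum this
    _ = (r + 1 : ℝ) * s ^ r := by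
        rw [Finset.sum_const, Finset.card_range, nsmul_eq_mul]
        push_cast
        ring

lemma lP_growth {r : ℕ} {p : ℝ} (hp0 : 0 < p) {s : ℝ} (hs : 1 ≤ s) :
    lP r s ≤ (Real.log (r + 1) + r * (2 / p)) * s ^ (p / 2) := by
  have hs0 : (0 : ℝ) < s := by linarith
  have h1 : lP r s ≤ Real.log (r + 1) + r * Real.log s := by
    have h := Real.log_le_log (Pr_pos r hs0.le) (Pr_le_poly r hs)
    rw [Real.log_mul (by positivity) (by positivity), Real.log_pow] at h
    simpa [lP] using h
  have hlog : Real.log s ≤ (2 / p) * s ^ (p / 2) := by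
    have hrp : (0 : ℝ) < s ^ (p / 2) := Real.rpow_pos_of_pos hs0 _
    have h2 : Real.log (s ^ (p / 2)) = (p / 2) * Real.log s := Real.log_rpow hs0 _
    have h3 : Real.log (s ^ (p / 2)) ≤ s ^ (p / 2) - 1 := Real.log_le_sub_one_of_pos hrp
    have h4 : (p / 2) * Real.log s ≤ s ^ (p / 2) := by rw [← h2]; linarith
    calc Real.log s = (2 / p) * ((p / 2) * Real.log s) := by field_simp
      _ ≤ (2 / p) * s ^ (p / 2) := mul_le_mul_of_nonneg_left h4 (by positivity)
  have hs1 : (1 : ℝ) ≤ s ^ (p / 2) := Real.one_le_rpow hs (by positivity)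
  have hlogr : (0 : ℝ) ≤ Real.log (r + 1) := Real.log_nonneg (by push_cast; linarith)
  calc lP r s ≤ Real.log (r + 1) + r * Real.log s := h1
    _ ≤ Real.log (r + 1) * s ^ (p / 2) + r * ((2 / p) * s ^ (p / 2)) := by
        have : (r : ℝ) * Real.log s ≤ r * ((2 / p) * s ^ (p / 2)) :=
          mul_le_mul_of_nonneg_left hlog (by positivity)
        nlinarith
    _ = (Real.log (r + 1) + r * (2 / p)) * s ^ (p / 2) := by ring


section Mellin

variable {r : ℕ} {p : ℝ}

/-- the Mellin-type integrand -/
noncomputable def g (r : ℕ) (p : ℝ) (s : ℝ) : ℝ := lP r s * s ^ (-p - 1)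

lemma measurable_g : Measurable (g r p) := by
  exact (Real.measurable_log.comp (continuous_Pr r).measurable).mul
    (measurable_id.pow_const _)

lemma g_nonneg {s : ℝ} (hs : 0 < s) : 0 ≤ g r p s :=
  mul_nonneg (lP_nonneg r hs.le) (Real.rpow_nonneg hs.le _)

lemma integrableOn_g (hr : 1 ≤ r) (hp0 : 0 < p) (hp1 : p < 1) :
    IntegrableOn (g r p) (Ioi (0 : ℝ)) := by
  have hunion : Ioc (0 : ℝ) 1 ∪ Ioi 1 = Ioi 0 := Ioc_union_Ioi_eq_Ioi zero_le_one
  rw [← hunion]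
  apply IntegrableOn.union
  · -- on (0,1] dominate by s ^ (-p)
    have hbound : IntegrableOn (fun s : ℝ => s ^ (-p)) (Ioc (0:ℝ) 1) := by
      have h := intervalIntegral.intervalIntegrable_rpow' (a := 0) (b := 1)
        (r := -p) (by linarith)
      rwa [intervalIntegrable_iff, uIoc_of_le zero_le_one] at h
    apply Integrable.mono' hbound (measurable_g.aestronglyMeasurable.restrict)
    filter_upwards [ae_restrict_mem measurableSet_Ioc] with s hs
    rcases hs with ⟨hs0, hs1⟩
    rw [Real.norm_eq_abs, abs_of_nonneg (g_nonneg hs0)]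
    calc g r p s ≤ s * s ^ (-p - 1) :=
          mul_le_mul_of_nonneg_right (lP_le r hs0.le) (Real.rpow_nonneg hs0.le _)
      _ = s ^ (-p) := by
          nth_rewrite 1 [← Real.rpow_one s]
          rw [← Real.rpow_add hs0]
          norm_num
  · -- on (1,∞) dominate by C * s ^ (-p/2 - 1)
    set C : ℝ := Real.log (r + 1) + r * (2 / p) with hC
    have hbound : IntegrableOn (fun s : ℝ => C * s ^ (-p / 2 - 1)) (Ioi (1:ℝ)) :=
      (integrableOn_Ioi_rpow_of_lt (by linarith) one_pos).const_mul C
    apply Integrable.mono' hbound (measurable_g.aestronglyMeasurable.restrict)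
    filter_upwards [ae_restrict_mem measurableSet_Ioi] with s hs
    have hs0 : (0 : ℝ) < s := lt_trans one_pos hs
    rw [Real.norm_eq_abs, abs_of_nonneg (g_nonneg hs0)]
    calc g r p s ≤ C * s ^ (p / 2) * s ^ (-p - 1) :=
          mul_le_mul_of_nonneg_right (lP_growth hp0 hs.le) (Real.rpow_nonneg hs0.le _)
      _ = C * s ^ (-p / 2 - 1) := by
          rw [mul_assoc, ← Real.rpow_add hs0]
          ring_nf
/-- the Mellin constant -/
noncomputable def J (r : ℕ) (p : ℝ) : ℝ := ∫ s in Ioi (0:ℝ), g r p s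

lemma J_pos (hr : 1 ≤ r) (hp0 : 0 < p) (hp1 : p < 1) : 0 < J r p := by
  set ε : ℝ := Real.log 2 * (2:ℝ) ^ (-p - 1) with hε
  have hε0 : 0 < ε := by
    apply mul_pos (Real.log_pos one_lt_two) (Real.rpow_pos_of_pos two_pos _)
  have hsub : Ioc (1:ℝ) 2 ⊆ Ioi (0:ℝ) := fun t ht => lt_trans one_pos ht.1
  have hint := integrableOn_g hr hp0 hp1
  have h1 : ε * (volume (Ioc (1:ℝ) 2)).toReal ≤ ∫ s in Ioc (1:ℝ) 2, g r p s := by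
    apply setIntegral_ge_of_const_le_real measurableSet_Ioc (by simp)
    · intro s hs
      have hs1 : (1:ℝ) ≤ s := hs.1.le
      have hs0 : (0:ℝ) < s := lt_of_lt_of_le one_pos hs1
      apply mul_le_mul (log_two_le_lP hr hs1) _ (Real.rpow_nonneg (by norm_num) _)
        (lP_nonneg r hs0.le)
      exact Real.rpow_le_rpow_of_nonpos hs0 hs.2 (by linarith)
    · exact hint.mono_set hsub
  have h2 : (∫ s in Ioc (1:ℝ) 2, g r p s) ≤ J r p := by
    apply setIntegral_mono_set hint
    · filter_upwards [ae_restrict_mem measurableSet_Ioi] with s hs using g_nonneg hs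
    · exact HasSubset.Subset.eventuallyLE hsub
  have hvol : (volume (Ioc (1:ℝ) 2)).toReal = 1 := by
    simp [Real.volume_Ioc]
    norm_num
  rw [hvol, mul_one] at h1
  linarith

lemma integrableOn_scaled (hr : 1 ≤ r) (hp0 : 0 < p) (hp1 : p < 1) {c : ℝ} (hc : 0 ≤ c) :
    IntegrableOn (fun t : ℝ => lP r (c * t) * t ^ (-p - 1)) (Ioi (0:ℝ)) := by
  rcases eq_or_lt_of_le hc with hc0 | hc0
  · apply (integrableOn_zero (ε' := ℝ)).congr_fun _ measurableSet_Ioi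
    intro t ht
    simp [← hc0, lP_zero]
  · have h1 : IntegrableOn (fun t : ℝ => g r p (c * t)) (Ioi (0:ℝ)) := by
      have := (integrableOn_Ioi_comp_mul_left_iff (g r p) 0 hc0).mpr
      simp only [mul_zero] at this
      exact this (integrableOn_g hr hp0 hp1)
    have h2 : IntegrableOn (fun t : ℝ => c ^ (p+1) * g r p (c * t)) (Ioi (0:ℝ)) :=
      h1.const_mul _
    apply h2.congr_fun _ measurableSet_Ioi
    intro t ht
    have ht0 : (0:ℝ) < t := ht
    have hpow : c ^ (p+1) * c ^ (-p-1) = 1 := by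
      rw [← Real.rpow_add hc0]; norm_num
    simp only [g]
    rw [Real.mul_rpow hc0.le ht0.le]
    linear_combination (lP r (c * t) * t ^ (-p - 1)) * hpow

lemma integral_scaled (hr : 1 ≤ r) (hp0 : 0 < p) (hp1 : p < 1) {c : ℝ} (hc : 0 ≤ c) :
    ∫ t in Ioi (0:ℝ), lP r (c * t) * t ^ (-p - 1) = c ^ p * J r p := by
  rcases eq_or_lt_of_le hc with hc0 | hc0
  · rw [← hc0, Real.zero_rpow (by linarith), zero_mul]
    rw [setIntegral_congr_fun measurableSet_Ioi
      (g := fun _ => (0:ℝ)) (by intro t ht; simp [lP_zero])]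
    simp
  · have key : ∀ t ∈ Ioi (0:ℝ), lP r (c * t) * t ^ (-p - 1)
        = c ^ (p + 1) * g r p (c * t) := by
      intro t ht
      have ht0 : (0:ℝ) < t := ht
      have hpow : c ^ (p+1) * c ^ (-p-1) = 1 := by
        rw [← Real.rpow_add hc0]; norm_num
      simp only [g]
      rw [Real.mul_rpow hc0.le ht0.le]
      linear_combination (-(lP r (c * t) * t ^ (-p - 1))) * hpow
    rw [setIntegral_congr_fun measurableSet_Ioi key]
    rw [integral_const_mul]
    rw [integral_comp_mul_left_Ioi (g r p) 0 hc0]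
    simp only [mul_zero, smul_eq_mul]
    rw [← mul_assoc, ← J]
    congr 1
    rw [← Real.rpow_neg_one c, ← Real.rpow_add hc0]
    norm_num

end Mellin


lemma sum_rpow_le {n r : ℕ} {p : ℝ} (hr : 1 ≤ r) (hp0 : 0 < p) (hp1 : p < 1)
    {x y : Fin n → ℝ} (hx : ∀ i, 0 ≤ x i) (hy : ∀ i, 0 ≤ y i)
    (hcomp : ∀ t : ℝ, 0 < t → ∑ i, lP r (x i * t) ≤ ∑ i, lP r (y i * t)) :
    ∑ i, x i ^ p ≤ ∑ i, y i ^ p := by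
  have key : ∀ z : Fin n → ℝ, (∀ i, 0 ≤ z i) →
      (∑ i, z i ^ p) * J r p
        = ∫ t in Ioi (0:ℝ), ∑ i, lP r (z i * t) * t ^ (-p - 1) := by
    intro z hz
    rw [integral_finset_sum _ (fun i _ => integrableOn_scaled hr hp0 hp1 (hz i)),
      Finset.sum_mul]
    exact Finset.sum_congr rfl fun i _ => (integral_scaled hr hp0 hp1 (hz i)).symm
  have hmono : (∑ i, x i ^ p) * J r p ≤ (∑ i, y i ^ p) * J r p := by
    rw [key x hx, key y hy]
    apply setIntegral_mono_on
    · exact integrable_finset_sum _ (fun i _ => integrableOn_scaled hr hp0 hp1 (hx i))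
    · exact integrable_finset_sum _ (fun i _ => integrableOn_scaled hr hp0 hp1 (hy i))
    · exact measurableSet_Ioi
    · intro t ht
      rw [← Finset.sum_mul, ← Finset.sum_mul]
      exact mul_le_mul_of_nonneg_right (hcomp t ht) (Real.rpow_nonneg (le_of_lt ht) _)
  exact le_of_mul_le_mul_right hmono (J_pos hr hp0 hp1)


lemma Fcoeff_eq (n r k : ℕ) (x : Fin n → ℝ) :
    Fcoeff n r k x = (∏ i, T r (x i)).coeff k := rfl

section Main

variable {n : ℕ} (hn : 1 ≤ n) {x y : Fin n → ℝ}
  (hx : ∀ i, 0 ≤ x i) (hy : ∀ i, 0 ≤ y i) {r : ℕ} (hr : 1 ≤ r)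
  (hF : ∀ k : ℕ, r ≤ k → k ≤ n * r → Fcoeff n r k x ≤ Fcoeff n r k y)

include hn hx hy hr hF

lemma sum_le : ∑ i, x i ≤ ∑ i, y i := by
  have h := hF r le_rfl (Nat.le_mul_of_pos_left r (by omega))
  rw [Fcoeff_eq, Fcoeff_eq, coeff_prod_T r x Finset.univ r le_rfl,
    coeff_prod_T r y Finset.univ r le_rfl] at h
  have hfac : (0:ℝ) < (Nat.factorial r : ℝ) := by
    exact_mod_cast Nat.factorial_pos r
  have h2 : (∑ i, x i) ^ r ≤ (∑ i, y i) ^ r := by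
    exact (div_le_div_iff_of_pos_right hfac).mp h
  exact (pow_le_pow_iff_left₀ (Finset.sum_nonneg fun i _ => hx i)
    (Finset.sum_nonneg fun i _ => hy i) (by omega)).mp h2

lemma prod_le : ∏ i, x i ≤ ∏ i, y i := by
  have h := hF (n * r) (Nat.le_mul_of_pos_left r (by omega)) le_rfl
  have hcard : (Finset.univ : Finset (Fin n)).card * r = n * r := by simp
  rw [Fcoeff_eq, Fcoeff_eq, ← hcard, coeff_prod_T_top r x Finset.univ,
    coeff_prod_T_top r y Finset.univ] at h
  have hfac : (0:ℝ) < (Nat.factorial r : ℝ) := by exact_mod_cast Nat.factorial_pos r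
  rw [Finset.prod_div_distrib, Finset.prod_div_distrib, Finset.prod_pow,
    Finset.prod_pow, Finset.prod_const] at h
  have hfacn : (0:ℝ) < (Nat.factorial r : ℝ) ^ (Finset.univ : Finset (Fin n)).card :=
    pow_pos hfac _
  have h2 : (∏ i, x i) ^ r ≤ (∏ i, y i) ^ r :=
    (div_le_div_iff_of_pos_right hfacn).mp h
  exact (pow_le_pow_iff_left₀ (Finset.prod_nonneg fun i _ => hx i)
    (Finset.prod_nonneg fun i _ => hy i) (by omega)).mp h2

lemma coeff_le (k : ℕ) :
    (∏ i, T r (x i)).coeff k ≤ (∏ i, T r (y i)).coeff k := by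
  rcases lt_or_ge k r with hk | hk
  · rw [coeff_prod_T r x Finset.univ k hk.le, coeff_prod_T r y Finset.univ k hk.le]
    have hfack : (0:ℝ) < (Nat.factorial k : ℝ) := by exact_mod_cast Nat.factorial_pos k
    exact (div_le_div_iff_of_pos_right hfack).mpr
      (pow_le_pow_left₀ (Finset.sum_nonneg fun i _ => hx i) (sum_le hn hx hy hr hF) k)
  · rcases le_or_gt k (n * r) with hk2 | hk2
    · have := hF k hk hk2
      rwa [Fcoeff_eq, Fcoeff_eq] at this
    · have hcard : (Finset.univ : Finset (Fin n)).card * r = n * r := by simp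
      rw [Polynomial.coeff_eq_zero_of_natDegree_lt
          (lt_of_le_of_lt (natDegree_prod_T_le r x Finset.univ) (by omega)),
        Polynomial.coeff_eq_zero_of_natDegree_lt
          (lt_of_le_of_lt (natDegree_prod_T_le r y Finset.univ) (by omega))]

lemma prodPr_le {t : ℝ} (ht : 0 ≤ t) :
    ∏ i, Pr r (x i * t) ≤ ∏ i, Pr r (y i * t) := by
  have hcard : (Finset.univ : Finset (Fin n)).card * r = n * r := by simp
  have hdx2 := natDegree_prod_T_le r x Finset.univ
  have hdy2 := natDegree_prod_T_le r y Finset.univ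
  rw [hcard] at hdx2 hdy2
  have hdx : (∏ i, T r (x i)).natDegree < n * r + 1 := Nat.lt_succ_of_le hdx2
  have hdy : (∏ i, T r (y i)).natDegree < n * r + 1 := Nat.lt_succ_of_le hdy2
  have hx1 : ∏ i, Pr r (x i * t) = (∏ i, T r (x i)).eval t := by
    rw [Polynomial.eval_prod]
    exact Finset.prod_congr rfl fun i _ => (eval_T r (x i) t).symm
  have hy1 : ∏ i, Pr r (y i * t) = (∏ i, T r (y i)).eval t := by
    rw [Polynomial.eval_prod]
    exact Finset.prod_congr rfl fun i _ => (eval_T r (y i) t).symm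
  rw [hx1, hy1, Polynomial.eval_eq_sum_range' hdx, Polynomial.eval_eq_sum_range' hdy]
  apply Finset.sum_le_sum
  intro k _
  exact mul_le_mul_of_nonneg_right (coeff_le hn hx hy hr hF k) (pow_nonneg ht k)

lemma sum_lP_le {t : ℝ} (ht : 0 ≤ t) :
    ∑ i, lP r (x i * t) ≤ ∑ i, lP r (y i * t) := by
  have hxprod : (0:ℝ) < ∏ i, Pr r (x i * t) :=
    Finset.prod_pos fun i _ => Pr_pos r (mul_nonneg (hx i) ht)
  have h1 : ∑ i, lP r (x i * t) = Real.log (∏ i, Pr r (x i * t)) := by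
    rw [Real.log_prod (fun i _ => (Pr_pos r (mul_nonneg (hx i) ht)).ne')]
    rfl
  have h2 : ∑ i, lP r (y i * t) = Real.log (∏ i, Pr r (y i * t)) := by
    rw [Real.log_prod (fun i _ => (Pr_pos r (mul_nonneg (hy i) ht)).ne')]
    rfl
  rw [h1, h2]
  exact Real.log_le_log hxprod (prodPr_le hn hx hy hr hF ht)

end Main


theorem main (n : ℕ) (hn : 1 ≤ n) (x y : Fin n → ℝ)
    (hx : ∀ i, 0 ≤ x i) (hy : ∀ i, 0 ≤ y i) (r : ℕ) (hr : 1 ≤ r)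
    (hF : ∀ k : ℕ, r ≤ k → k ≤ n * r → Fcoeff n r k x ≤ Fcoeff n r k y) :
    ∀ p : ℝ, 0 ≤ p → p ≤ 1 → pNorm p x ≤ pNorm p y := by
  intro p hp0 hp1
  by_cases hp : p = 0
  · rw [pNorm, pNorm, if_pos hp, if_pos hp]
    exact Real.rpow_le_rpow (Finset.prod_nonneg fun i _ => hx i)
      (prod_le hn hx hy hr hF) (by positivity)
  · have hppos : 0 < p := lt_of_le_of_ne hp0 (Ne.symm hp)
    rw [pNorm, pNorm, if_neg hp, if_neg hp]
    apply Real.rpow_le_rpow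
    · exact mul_nonneg (by positivity)
        (Finset.sum_nonneg fun i _ => Real.rpow_nonneg (hx i) p)
    · apply mul_le_mul_of_nonneg_left _ (by positivity)
      rcases eq_or_lt_of_le hp1 with hpe | hplt
      · subst hpe
        simp only [Real.rpow_one]
        exact sum_le hn hx hy hr hF
      · exact sum_rpow_le hr hppos hplt hx hy
          (fun t ht => sum_lP_le hn hx hy hr hF ht.le)
    · positivity

end PNormAux

theorem stmt_0 (n : ℕ) (hn : 1 ≤ n) (x y : Fin n → ℝ)
    (hx : ∀ i, 0 ≤ x i) (hy : ∀ i, 0 ≤ y i) (r : ℕ) (hr : 1 ≤ r)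
    (hF : ∀ k : ℕ, r ≤ k → k ≤ n * r → Fcoeff n r k x ≤ Fcoeff n r k y) :
    ∀ p : ℝ, 0 ≤ p → p ≤ 1 → pNorm p x ≤ pNorm p y :=
  PNormAux.main n hn x y hx hy r hr hF
end

section
/- Let n ≥ 1 and let x, y ∈ [0,∞)^n, and fix an integer r ≥ 1. Suppose that F_{k,r}(x) ≤ F_{k,r}(y) for all integers k with r ≤ k ≤ nr, and that Σ_{i=1}^n x_i = Σ_{i=1}^n y_i. Then ‖x‖_p ≥ ‖y‖_p for every real p with 1 ≤ p ≤ r+1. -/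
open scoped BigOperators
open Finset Polynomial Real MeasureTheory Set

/-! ### Auxiliary polynomial lemmas -/

lemma coeff_q (r : ℕ) (a : ℝ) (m : ℕ) :
    (∑ j ∈ Finset.range (r + 1), Polynomial.C (a ^ j / (Nat.factorial j : ℝ)) * Polynomial.X ^ j).coeff m
      = if m ≤ r then a ^ m / (Nat.factorial m : ℝ) else 0 := by
  rw [Polynomial.finset_sum_coeff]
  simp only [Polynomial.coeff_C_mul, Polynomial.coeff_X_pow, mul_ite, mul_one, mul_zero]
  rw [Finset.sum_ite_eq]
  simp [Nat.lt_succ_iff]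

lemma coeff_prod_small (n r : ℕ) (x : Fin n → ℝ) (s : Finset (Fin n)) (k : ℕ) (hk : k ≤ r) :
    (∏ i ∈ s, ∑ j ∈ Finset.range (r + 1),
        Polynomial.C ((x i) ^ j / (Nat.factorial j : ℝ)) * Polynomial.X ^ j).coeff k
      = (∑ i ∈ s, x i) ^ k / (Nat.factorial k : ℝ) := by
  induction s using Finset.cons_induction generalizing k with
  | empty =>
    simp only [Finset.prod_empty, Finset.sum_empty, Polynomial.coeff_one]
    rcases Nat.eq_zero_or_pos k with h | h
    · simp [h]
    · rw [if_neg (by omega), zero_pow (by omega), zero_div]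
  | cons a s ha ih =>
    rw [Finset.prod_cons, Finset.sum_cons, Polynomial.coeff_mul,
      Finset.Nat.sum_antidiagonal_eq_sum_range_succ_mk]
    have key : ∀ m ∈ Finset.range (k + 1),
        (∑ j ∈ Finset.range (r + 1),
          Polynomial.C ((x a) ^ j / (Nat.factorial j : ℝ)) * Polynomial.X ^ j).coeff m *
        (∏ i ∈ s, ∑ j ∈ Finset.range (r + 1),
          Polynomial.C ((x i) ^ j / (Nat.factorial j : ℝ)) * Polynomial.X ^ j).coeff (k - m)
        = (x a) ^ m * (∑ i ∈ s, x i) ^ (k - m) * (k.choose m : ℝ) / (Nat.factorial k : ℝ) := by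
      intro m hm
      rw [Finset.mem_range, Nat.lt_succ_iff] at hm
      rw [coeff_q, if_pos (hm.trans hk), ih (k - m) (le_trans (Nat.sub_le _ _) hk)]
      have hfac : (k.choose m : ℝ) * (m.factorial : ℝ) * ((k - m).factorial : ℝ)
          = (k.factorial : ℝ) := by
        exact_mod_cast congrArg (Nat.cast : ℕ → ℝ)
          (Nat.choose_mul_factorial_mul_factorial hm)
      have h1 : (m.factorial : ℝ) ≠ 0 := Nat.cast_ne_zero.2 m.factorial_ne_zero
      have h2 : ((k - m).factorial : ℝ) ≠ 0 := Nat.cast_ne_zero.2 (k - m).factorial_ne_zero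
      have h3 : (k.factorial : ℝ) ≠ 0 := Nat.cast_ne_zero.2 k.factorial_ne_zero
      rw [div_mul_div_comm, div_eq_div_iff (mul_ne_zero h1 h2) h3]
      linear_combination (-(x a) ^ m * (∑ i ∈ s, x i) ^ (k - m)) * hfac
    rw [Finset.sum_congr rfl key, ← Finset.sum_div, add_pow]

noncomputable def qpoly (r : ℕ) (a : ℝ) : Polynomial ℝ :=
  ∑ j ∈ Finset.range (r + 1), Polynomial.C (a ^ j / (Nat.factorial j : ℝ)) * Polynomial.X ^ j

noncomputable def prS (r : ℕ) (u : ℝ) : ℝ :=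
  ∑ j ∈ Finset.range (r + 1), u ^ j / (Nat.factorial j : ℝ)

lemma qpoly_natDegree_le (r : ℕ) (a : ℝ) : (qpoly r a).natDegree ≤ r := by
  refine Polynomial.natDegree_sum_le_of_forall_le _ _ fun j hj => ?_
  rw [Finset.mem_range, Nat.lt_succ_iff] at hj
  refine le_trans (Polynomial.natDegree_mul_le) ?_
  simp [Polynomial.natDegree_X_pow, hj]

lemma qpoly_eval (r : ℕ) (a t : ℝ) : (qpoly r a).eval t = prS r (a * t) := by
  rw [qpoly, prS, Polynomial.eval_finset_sum]
  refine Finset.sum_congr rfl fun j _ => ?_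
  simp [mul_pow]; ring

lemma prod_natDegree_le (n r : ℕ) (x : Fin n → ℝ) :
    (∏ i, qpoly r (x i)).natDegree ≤ n * r := by
  refine le_trans (Polynomial.natDegree_prod_le _ _) ?_
  calc ∑ i, (qpoly r (x i)).natDegree ≤ ∑ _i : Fin n, r :=
        Finset.sum_le_sum fun i _ => qpoly_natDegree_le r (x i)
    _ = n * r := by simp [Finset.sum_const, mul_comm]

lemma prod_eval_le (n : ℕ) (x y : Fin n → ℝ) (r : ℕ)
    (hc : ∀ k, (∏ i, qpoly r (x i)).coeff k ≤ (∏ i, qpoly r (y i)).coeff k)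
    (t : ℝ) (ht : 0 ≤ t) :
    (∏ i, qpoly r (x i)).eval t ≤ (∏ i, qpoly r (y i)).eval t := by
  rw [Polynomial.eval_eq_sum_range' (Nat.lt_succ_of_le (prod_natDegree_le n r x)),
    Polynomial.eval_eq_sum_range' (Nat.lt_succ_of_le (prod_natDegree_le n r y))]
  exact Finset.sum_le_sum fun k _ => mul_le_mul_of_nonneg_right (hc k) (pow_nonneg ht k)

/-! ### Properties of `prS` and `hfun` -/

noncomputable def hfun (r : ℕ) (u : ℝ) : ℝ := u - Real.log (prS r u)

lemma one_le_prS (r : ℕ) {u : ℝ} (hu : 0 ≤ u) : 1 ≤ prS r u := by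
  have h0 : (0:ℕ) ∈ Finset.range (r + 1) := by simp
  calc (1:ℝ) = u ^ 0 / (Nat.factorial 0 : ℝ) := by simp
    _ ≤ prS r u := Finset.single_le_sum (f := fun j => u ^ j / (Nat.factorial j : ℝ))
        (fun j _ => by positivity) h0

lemma prS_pos (r : ℕ) {u : ℝ} (hu : 0 ≤ u) : 0 < prS r u :=
  lt_of_lt_of_le one_pos (one_le_prS r hu)

lemma prS_le_exp (r : ℕ) {u : ℝ} (hu : 0 ≤ u) : prS r u ≤ Real.exp u :=
  Real.sum_le_exp_of_nonneg hu (r + 1)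

lemma prS_lt_exp (r : ℕ) {u : ℝ} (hu : 0 < u) : prS r u < Real.exp u := by
  have h := Real.sum_le_exp_of_nonneg hu.le (r + 2)
  rw [Finset.sum_range_succ] at h
  have : 0 < u ^ (r + 1) / ((r + 1).factorial : ℝ) := by positivity
  calc prS r u < prS r u + u ^ (r + 1) / ((r + 1).factorial : ℝ) := by linarith
    _ ≤ Real.exp u := h

lemma log_prS_nonneg (r : ℕ) {u : ℝ} (hu : 0 ≤ u) : 0 ≤ Real.log (prS r u) :=
  Real.log_nonneg (one_le_prS r hu)

lemma hfun_nonneg (r : ℕ) {u : ℝ} (hu : 0 ≤ u) : 0 ≤ hfun r u := by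
  have := Real.log_le_log (prS_pos r hu) (prS_le_exp r hu)
  rw [Real.log_exp] at this
  simpa [hfun] using this

lemma hfun_pos (r : ℕ) {u : ℝ} (hu : 0 < u) : 0 < hfun r u := by
  have := Real.log_lt_log (prS_pos r hu.le) (prS_lt_exp r hu)
  rw [Real.log_exp] at this
  simpa [hfun] using this

lemma hfun_le_self (r : ℕ) {u : ℝ} (hu : 0 ≤ u) : hfun r u ≤ u := by
  have := log_prS_nonneg r hu
  simp only [hfun]; linarith

lemma hfun_zero (r : ℕ) : hfun r 0 = 0 := by
  have : prS r 0 = 1 := by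
    rw [prS, Finset.sum_eq_single 0]
    · simp
    · intro j _ hj; rw [zero_pow hj, zero_div]
    · simp
  simp [hfun, this]

noncomputable def Cr (r : ℕ) : ℝ :=
  ((r + 2 : ℕ) : ℝ) / (((r + 1).factorial : ℝ) * ((r + 1 : ℕ) : ℝ))

lemma hfun_le_pow (r : ℕ) {u : ℝ} (hu : 0 ≤ u) (hu1 : u ≤ 1) :
    hfun r u ≤ Cr r * u ^ (r + 1) := by
  have hP1 : 1 ≤ prS r u := one_le_prS r hu
  have hP0 : 0 < prS r u := prS_pos r hu
  have hle : prS r u ≤ Real.exp u := prS_le_exp r hu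
  have h1 : hfun r u = Real.log (Real.exp u / prS r u) := by
    rw [Real.log_div (Real.exp_ne_zero u) (ne_of_gt hP0), Real.log_exp, hfun]
  have h2 : Real.log (Real.exp u / prS r u) ≤ Real.exp u / prS r u - 1 :=
    Real.log_le_sub_one_of_pos (by positivity)
  have h3 : Real.exp u / prS r u - 1 = (Real.exp u - prS r u) / prS r u := by
    field_simp
  have h4 : (Real.exp u - prS r u) / prS r u ≤ Real.exp u - prS r u :=
    div_le_self (by linarith) hP1
  have h5 : Real.exp u - prS r u ≤ u ^ (r + 1) * Cr r := by
    have hb := (abs_le.mp (Real.exp_bound (x := u) (n := r + 1)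
      (by rwa [abs_of_nonneg hu]) (Nat.succ_pos r))).2
    rw [abs_of_nonneg hu] at hb
    unfold prS
    refine le_trans hb (le_of_eq ?_)
    rw [Cr]
  calc hfun r u ≤ Real.exp u - prS r u := by rw [h1]; linarith [h2, h3 ▸ h2]
    _ ≤ u ^ (r + 1) * Cr r := h5
    _ = Cr r * u ^ (r + 1) := mul_comm _ _

/-! ### Integrability and the integral representation -/

lemma continuous_prS (r : ℕ) : Continuous (prS r) := by
  unfold prS
  exact continuous_finset_sum _ fun j _ => (continuous_pow j).div_const _

lemma continuousOn_hfun_mul (r : ℕ) (q : ℝ) :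
    ContinuousOn (fun u : ℝ => hfun r u * u ^ q) (Set.Ioi 0) := by
  intro u hu
  have hu0 : (0:ℝ) < u := hu
  refine ContinuousWithinAt.mul ?_ ?_
  · refine (ContinuousAt.sub continuousAt_id ?_).continuousWithinAt
    exact (Real.continuousAt_log (ne_of_gt (prS_pos r hu0.le))).comp
      (continuous_prS r).continuousAt
  · exact (Real.continuousAt_rpow_const u q (Or.inl hu0.ne')).continuousWithinAt

lemma integrableOn_hfun (r : ℕ) {p : ℝ} (hp1 : 1 < p) (hpr : p < r + 1) :
    IntegrableOn (fun u : ℝ => hfun r u * u ^ (-(p+1))) (Set.Ioi 0) := by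
  rw [← Set.Ioc_union_Ioi_eq_Ioi (zero_le_one (α := ℝ))]
  refine MeasureTheory.IntegrableOn.union ?_ ?_
  · rw [integrableOn_Ioc_iff_integrableOn_Ioo]
    refine MeasureTheory.Integrable.mono'
      (g := fun u : ℝ => Cr r * u ^ ((r:ℝ) - p)) ?_ ?_ ?_
    · exact ((intervalIntegral.integrableOn_Ioo_rpow_iff zero_lt_one).mpr
        (by linarith)).const_mul _
    · exact ((continuousOn_hfun_mul r _).mono
        (fun u hu => hu.1)).aestronglyMeasurable measurableSet_Ioo
    · filter_upwards [MeasureTheory.ae_restrict_mem measurableSet_Ioo] with u hu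
      have hu0 : (0:ℝ) < u := hu.1
      have h1 : (0:ℝ) ≤ hfun r u * u ^ (-(p+1)) :=
        mul_nonneg (hfun_nonneg r hu0.le) (Real.rpow_nonneg hu0.le _)
      rw [Real.norm_of_nonneg h1]
      calc hfun r u * u ^ (-(p+1)) ≤ (Cr r * u ^ (r+1)) * u ^ (-(p+1)) :=
            mul_le_mul_of_nonneg_right (hfun_le_pow r hu0.le hu.2.le)
              (Real.rpow_nonneg hu0.le _)
        _ = Cr r * u ^ ((r:ℝ) - p) := by
            rw [mul_assoc, ← Real.rpow_natCast u (r+1), ← Real.rpow_add hu0]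
            congr 2
            push_cast; ring
  · refine MeasureTheory.Integrable.mono'
      (g := fun u : ℝ => u ^ (-p)) ?_ ?_ ?_
    · exact integrableOn_Ioi_rpow_of_lt (by linarith) zero_lt_one
    · exact ((continuousOn_hfun_mul r _).mono
        (fun u (hu : u ∈ Set.Ioi (1:ℝ)) => Set.mem_Ioi.mpr (lt_trans zero_lt_one (Set.mem_Ioi.mp hu)))).aestronglyMeasurable
        measurableSet_Ioi
    · filter_upwards [MeasureTheory.ae_restrict_mem measurableSet_Ioi] with u hu
      have hu0 : (0:ℝ) < u := lt_trans zero_lt_one hu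
      have h1 : (0:ℝ) ≤ hfun r u * u ^ (-(p+1)) :=
        mul_nonneg (hfun_nonneg r hu0.le) (Real.rpow_nonneg hu0.le _)
      rw [Real.norm_of_nonneg h1]
      calc hfun r u * u ^ (-(p+1)) ≤ u * u ^ (-(p+1)) :=
            mul_le_mul_of_nonneg_right (hfun_le_self r hu0.le)
              (Real.rpow_nonneg hu0.le _)
        _ = u ^ (1:ℝ) * u ^ (-(p+1)) := by rw [Real.rpow_one]
        _ = u ^ (-p) := by rw [← Real.rpow_add hu0]; norm_num

noncomputable def cP (r : ℕ) (p : ℝ) : ℝ :=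
  ∫ u in Set.Ioi (0:ℝ), hfun r u * u ^ (-(p+1))

lemma cP_pos (r : ℕ) {p : ℝ} (hp1 : 1 < p) (hpr : p < r + 1) : 0 < cP r p := by
  have hnn : 0 ≤ᶠ[MeasureTheory.ae (volume.restrict (Set.Ioi (0:ℝ)))]
      fun u => hfun r u * u ^ (-(p+1)) := by
    filter_upwards [MeasureTheory.ae_restrict_mem measurableSet_Ioi] with u hu
    exact mul_nonneg (hfun_nonneg r (le_of_lt hu)) (Real.rpow_nonneg (le_of_lt hu) _)
  rw [cP, setIntegral_pos_iff_support_of_nonneg_ae hnn (integrableOn_hfun r hp1 hpr)]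
  have hsub : Set.Ioi (0:ℝ) ⊆
      (Function.support fun u => hfun r u * u ^ (-(p+1))) ∩ Set.Ioi 0 := by
    intro u hu
    have hu0 : (0:ℝ) < u := hu
    exact ⟨ne_of_gt (mul_pos (hfun_pos r hu0) (Real.rpow_pos_of_pos hu0 _)), hu⟩
  calc (0:ENNReal) < volume (Set.Ioi (0:ℝ)) := by simp [Real.volume_Ioi]
    _ ≤ _ := measure_mono hsub

lemma scaled_integrable (r : ℕ) {p : ℝ} (hp1 : 1 < p) (hpr : p < r + 1)
    {a : ℝ} (ha : 0 ≤ a) :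
    IntegrableOn (fun t : ℝ => hfun r (a * t) * t ^ (-(p+1))) (Set.Ioi 0) := by
  rcases eq_or_lt_of_le ha with rfl | ha'
  · have heq : (fun t : ℝ => hfun r (0 * t) * t ^ (-(p+1))) = fun _ => (0:ℝ) := by
      funext t; simp [hfun_zero]
    rw [heq]
    exact MeasureTheory.integrableOn_zero
  · have hg := integrableOn_hfun r hp1 hpr
    have hcomp : IntegrableOn
        (fun t : ℝ => hfun r (a * t) * (a * t) ^ (-(p+1))) (Set.Ioi 0) := by
      have := (integrableOn_Ioi_comp_mul_left_iff
        (fun u : ℝ => hfun r u * u ^ (-(p+1))) 0 ha').mpr (by simpa using hg)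
      simpa using this
    refine MeasureTheory.IntegrableOn.congr_fun
      (hcomp.const_mul (a ^ (p+1))) (fun t ht => ?_) measurableSet_Ioi
    · have ht0 : (0:ℝ) < t := ht
      have hone : a ^ (p+1) * a ^ (-(p+1)) = (1:ℝ) := by
        rw [← Real.rpow_add ha', show p + 1 + -(p+1) = 0 from by ring, Real.rpow_zero]
      rw [Real.mul_rpow ha'.le ht0.le]
      calc a ^ (p+1) * (hfun r (a*t) * (a ^ (-(p+1)) * t ^ (-(p+1))))
          = (a ^ (p+1) * a ^ (-(p+1))) * (hfun r (a*t) * t ^ (-(p+1))) := by ring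
        _ = hfun r (a*t) * t ^ (-(p+1)) := by rw [hone, one_mul]

lemma scaled_eq (r : ℕ) {p : ℝ} (hp1 : 1 < p) (hpr : p < r + 1)
    {a : ℝ} (ha : 0 ≤ a) :
    ∫ t in Set.Ioi (0:ℝ), hfun r (a * t) * t ^ (-(p+1)) = a ^ p * cP r p := by
  rcases eq_or_lt_of_le ha with rfl | ha'
  · rw [Real.zero_rpow (by linarith), zero_mul]
    rw [MeasureTheory.setIntegral_congr_fun measurableSet_Ioi
      (g := fun _ => (0:ℝ)) (fun t _ => by simp [hfun_zero])]
    simp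
  · have hone : a ^ (p+1) * a ^ (-(p+1)) = (1:ℝ) := by
      rw [← Real.rpow_add ha', show p + 1 + -(p+1) = 0 from by ring, Real.rpow_zero]
    have step1 : ∫ t in Set.Ioi (0:ℝ), hfun r (a * t) * t ^ (-(p+1))
        = ∫ t in Set.Ioi (0:ℝ),
            a ^ (p+1) * (hfun r (a*t) * (a*t) ^ (-(p+1))) := by
      refine MeasureTheory.setIntegral_congr_fun measurableSet_Ioi fun t ht => ?_
      have ht0 : (0:ℝ) < t := ht
      rw [Real.mul_rpow ha'.le ht0.le]
      calc hfun r (a*t) * t ^ (-(p+1))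
          = (a ^ (p+1) * a ^ (-(p+1))) * (hfun r (a*t) * t ^ (-(p+1))) := by
            rw [hone, one_mul]
        _ = a ^ (p+1) * (hfun r (a*t) * (a ^ (-(p+1)) * t ^ (-(p+1)))) := by ring
    have step2 := MeasureTheory.integral_comp_mul_left_Ioi
      (fun u : ℝ => hfun r u * u ^ (-(p+1))) 0 ha'
    rw [mul_zero] at step2
    rw [step1, MeasureTheory.integral_const_mul, step2, smul_eq_mul, ← cP, ← mul_assoc]
    congr 1
    rw [← Real.rpow_neg_one a, ← Real.rpow_add ha']
    norm_num

/-! ### The main power-sum comparison -/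

lemma powsum_le (n : ℕ) (x y : Fin n → ℝ) (hx : ∀ i, 0 ≤ x i) (hy : ∀ i, 0 ≤ y i)
    (r : ℕ)
    (hprod : ∀ t : ℝ, 0 ≤ t → ∏ i, prS r (x i * t) ≤ ∏ i, prS r (y i * t))
    (hsum : ∑ i, x i = ∑ i, y i)
    {p : ℝ} (hp1 : 1 < p) (hpr : p < r + 1) :
    ∑ i, (y i) ^ p ≤ ∑ i, (x i) ^ p := by
  have hptw : ∀ t ∈ Set.Ioi (0:ℝ),
      ∑ i, hfun r (y i * t) * t ^ (-(p+1)) ≤ ∑ i, hfun r (x i * t) * t ^ (-(p+1)) := by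
    intro t ht
    have ht0 : (0:ℝ) < t := ht
    have hlogs : ∑ i, Real.log (prS r (x i * t)) ≤ ∑ i, Real.log (prS r (y i * t)) := by
      have hprodpos : 0 < ∏ i, prS r (x i * t) :=
        Finset.prod_pos fun i _ => prS_pos r (mul_nonneg (hx i) ht0.le)
      have h1 := Real.log_le_log hprodpos (hprod t ht0.le)
      rw [Real.log_prod (fun i _ => ne_of_gt (prS_pos r (mul_nonneg (hx i) ht0.le))),
        Real.log_prod (fun i _ => ne_of_gt (prS_pos r (mul_nonneg (hy i) ht0.le)))] at h1
      exact h1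
    have hsums : ∑ i, hfun r (y i * t) ≤ ∑ i, hfun r (x i * t) := by
      simp only [hfun, Finset.sum_sub_distrib, ← Finset.sum_mul]
      rw [hsum]
      linarith [hlogs]
    rw [← Finset.sum_mul, ← Finset.sum_mul]
    exact mul_le_mul_of_nonneg_right hsums (Real.rpow_nonneg ht0.le _)
  have hix : ∀ i : Fin n, IntegrableOn
      (fun t : ℝ => hfun r (x i * t) * t ^ (-(p+1))) (Set.Ioi 0) :=
    fun i => scaled_integrable r hp1 hpr (hx i)
  have hiy : ∀ i : Fin n, IntegrableOn
      (fun t : ℝ => hfun r (y i * t) * t ^ (-(p+1))) (Set.Ioi 0) :=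
    fun i => scaled_integrable r hp1 hpr (hy i)
  have hintle : ∫ t in Set.Ioi (0:ℝ), ∑ i, hfun r (y i * t) * t ^ (-(p+1))
      ≤ ∫ t in Set.Ioi (0:ℝ), ∑ i, hfun r (x i * t) * t ^ (-(p+1)) :=
    MeasureTheory.setIntegral_mono_on
      (MeasureTheory.integrable_finset_sum _ fun i _ => hiy i)
      (MeasureTheory.integrable_finset_sum _ fun i _ => hix i)
      measurableSet_Ioi hptw
  rw [MeasureTheory.integral_finset_sum _ fun i _ => hiy i,
    MeasureTheory.integral_finset_sum _ fun i _ => hix i] at hintle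
  have hxv : ∀ i : Fin n, ∫ t in Set.Ioi (0:ℝ), hfun r (x i * t) * t ^ (-(p+1))
      = (x i) ^ p * cP r p := fun i => scaled_eq r hp1 hpr (hx i)
  have hyv : ∀ i : Fin n, ∫ t in Set.Ioi (0:ℝ), hfun r (y i * t) * t ^ (-(p+1))
      = (y i) ^ p * cP r p := fun i => scaled_eq r hp1 hpr (hy i)
  rw [Finset.sum_congr rfl fun i _ => hxv i, Finset.sum_congr rfl fun i _ => hyv i,
    ← Finset.sum_mul, ← Finset.sum_mul] at hintle
  exact le_of_mul_le_mul_right hintle (cP_pos r hp1 hpr)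

theorem stmt_1 (n : ℕ) (hn : 1 ≤ n) (x y : Fin n → ℝ)
    (hx : ∀ i, 0 ≤ x i) (hy : ∀ i, 0 ≤ y i) (r : ℕ) (hr : 1 ≤ r)
    (hF : ∀ k : ℕ, r ≤ k → k ≤ n * r → Fcoeff n r k x ≤ Fcoeff n r k y)
    (hsum : ∑ i, x i = ∑ i, y i) :
    ∀ p : ℝ, 1 ≤ p → p ≤ r + 1 → pNorm p y ≤ pNorm p x := by
  -- coefficientwise comparison for all k
  have hc : ∀ k, (∏ i, qpoly r (x i)).coeff k ≤ (∏ i, qpoly r (y i)).coeff k := by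
    intro k
    rcases lt_or_ge k r with hk | hk
    · have h1 := coeff_prod_small n r x Finset.univ k hk.le
      have h2 := coeff_prod_small n r y Finset.univ k hk.le
      simp only [qpoly]
      rw [h1, h2, hsum]
    · rcases le_or_gt k (n * r) with hk2 | hk2
      · exact hF k hk hk2
      · have hzx : (∏ i, qpoly r (x i)).coeff k = 0 :=
          Polynomial.coeff_eq_zero_of_natDegree_lt
            (lt_of_le_of_lt (prod_natDegree_le n r x) hk2)
        have hzy : (∏ i, qpoly r (y i)).coeff k = 0 :=
          Polynomial.coeff_eq_zero_of_natDegree_lt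
            (lt_of_le_of_lt (prod_natDegree_le n r y) hk2)
        rw [hzx, hzy]
  -- pointwise product comparison
  have hprod : ∀ t : ℝ, 0 ≤ t → ∏ i, prS r (x i * t) ≤ ∏ i, prS r (y i * t) := by
    intro t ht
    have := prod_eval_le n x y r hc t ht
    rw [Polynomial.eval_prod, Polynomial.eval_prod] at this
    simpa only [qpoly_eval] using this
  -- power sums for 1 < p < r + 1
  have hps : ∀ p : ℝ, 1 < p → p < r + 1 → ∑ i, (y i) ^ p ≤ ∑ i, (x i) ^ p :=
    fun p hp1 hpr => powsum_le n x y hx hy r hprod hsum hp1 hpr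
  -- power sums for all 1 ≤ p ≤ r + 1
  have hps' : ∀ p : ℝ, 1 ≤ p → p ≤ r + 1 → ∑ i, (y i) ^ p ≤ ∑ i, (x i) ^ p := by
    intro p hp1 hpr
    rcases eq_or_lt_of_le hp1 with rfl | hp1'
    · simp only [Real.rpow_one]
      exact le_of_eq hsum.symm
    rcases eq_or_lt_of_le hpr with rfl | hpr'
    · -- p = r + 1 : take a limit
      have hq : Filter.Tendsto (fun m : ℕ => ((r:ℝ) + 1) - 1 / (m + 1))
          Filter.atTop (nhds ((r:ℝ) + 1)) := by
        simpa using Filter.Tendsto.const_sub ((r:ℝ) + 1)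
          tendsto_one_div_add_atTop_nhds_zero_nat
      have hterm : ∀ z : Fin n → ℝ,
          Filter.Tendsto (fun m : ℕ => ∑ i, (z i) ^ (((r:ℝ) + 1) - 1 / (m + 1)))
            Filter.atTop (nhds (∑ i, (z i) ^ ((r:ℝ) + 1))) := by
        intro z
        refine tendsto_finset_sum _ fun i _ => ?_
        exact (Real.continuousAt_const_rpow' (by positivity : ((r:ℝ) + 1) ≠ 0)).tendsto.comp hq
      refine le_of_tendsto_of_tendsto (hterm y) (hterm x) ?_
      filter_upwards [Filter.eventually_ge_atTop 1] with m hm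
      have hmr : (0:ℝ) < (m:ℝ) + 1 := by positivity
      have h1 : 1 / ((m:ℝ) + 1) ≤ 1 / 2 := by
        rw [div_le_div_iff₀ hmr (by norm_num)]
        have : (1:ℝ) ≤ (m:ℝ) := by exact_mod_cast hm
        linarith
      have hr1 : (1:ℝ) ≤ (r:ℝ) := by exact_mod_cast hr
      refine hps _ (by linarith) ?_
      have : 0 < 1 / ((m:ℝ) + 1) := by positivity
      linarith
    · exact hps p hp1' hpr'
  -- conclude
  intro p hp1 hpr
  have hp0 : p ≠ 0 := by linarith
  rw [pNorm, pNorm, if_neg hp0, if_neg hp0]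
  have hnn : (0:ℝ) ≤ ((n:ℝ))⁻¹ := by positivity
  refine Real.rpow_le_rpow ?_ ?_ (by positivity)
  · exact mul_nonneg hnn (Finset.sum_nonneg fun i _ => Real.rpow_nonneg (hy i) p)
  · exact mul_le_mul_of_nonneg_left (hps' p hp1 hpr) hnn
end

section
/- Fix an integer r ≥ 0 and a real number p with r < p < r+1. Then the improper integral C_p := ∫_0^∞ ψ_r(t) t^{−p−1} dt converges to a finite strictly positive value, and for every real a > 0 one has a^p = C_p^{−1} ∫_0^∞ ψ_r(a t) t^{−p−1} dt. -/
open scoped BigOperators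

/-- `Q_r(s) = Σ_{m=1}^r (-1)^(m-1) s^m / m`, the `r`-th Taylor polynomial of `log(1+s)`
(`Q_0 = 0`), and `ψ_r(t) = (-1)^r (log(1+t) - Q_r(t))`. -/
noncomputable def psiFun (r : ℕ) (t : ℝ) : ℝ :=
  (-1 : ℝ) ^ r *
    (Real.log (1 + t) - ∑ m ∈ Finset.Icc 1 r, (-1 : ℝ) ^ (m - 1) * t ^ m / m)

open MeasureTheory Set Real

lemma geom_sum_aux (r : ℕ) (t : ℝ) :
    (1 + t) * ∑ m ∈ Finset.Icc 1 r, (-1 : ℝ) ^ (m - 1) * t ^ (m - 1) = 1 - (-t) ^ r := by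
  induction r with
  | zero => simp
  | succ n ih =>
    rw [Finset.sum_Icc_succ_top (by omega)]
    have h : (n + 1 - 1) = n := by omega
    rw [h, mul_add, ih, neg_pow, neg_pow]
    ring

lemma psi_hasDerivAt (r : ℕ) {t : ℝ} (ht : -1 < t) :
    HasDerivAt (psiFun r) (t ^ r / (1 + t)) t := by
  have h1t : (1 : ℝ) + t ≠ 0 := by linarith
  have hlog : HasDerivAt (fun s : ℝ => Real.log (1 + s)) (1 / (1 + t)) t := by
    simpa using (((hasDerivAt_id t).const_add 1).log h1t)
  have hsum : HasDerivAt (fun s : ℝ => ∑ m ∈ Finset.Icc 1 r, (-1 : ℝ) ^ (m - 1) * s ^ m / m)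
      (∑ m ∈ Finset.Icc 1 r, (-1 : ℝ) ^ (m - 1) * t ^ (m - 1)) t := by
    apply HasDerivAt.fun_sum
    intro m hm
    have hm1 : 1 ≤ m := (Finset.mem_Icc.mp hm).1
    have hmne : (m : ℝ) ≠ 0 := Nat.cast_ne_zero.mpr (by omega)
    have h0 : HasDerivAt (fun s : ℝ => (-1 : ℝ) ^ (m - 1) * s ^ m / m)
        ((-1 : ℝ) ^ (m - 1) * (m * t ^ (m - 1)) / m) t :=
      (((hasDerivAt_pow m t).const_mul ((-1 : ℝ) ^ (m - 1)))).div_const m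
    refine h0.congr_deriv ?_
    field_simp
  have hd : HasDerivAt (psiFun r)
      ((-1 : ℝ) ^ r * (1 / (1 + t) - ∑ m ∈ Finset.Icc 1 r, (-1 : ℝ) ^ (m - 1) * t ^ (m - 1)))
      t := (hlog.sub hsum).const_mul _
  convert hd using 1
  have hS := geom_sum_aux r t
  have h2 : ((-1:ℝ))^(r*2) = 1 := by rw [mul_comm, pow_mul]; norm_num
  have hSdiv : (∑ m ∈ Finset.Icc 1 r, (-1 : ℝ) ^ (m - 1) * t ^ (m - 1))
      = (1 - (-t)^r)/(1+t) := by rw [eq_div_iff h1t]; linarith [hS]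
  rw [hSdiv, neg_pow]
  field_simp
  linear_combination (-(t^r)) * h2

lemma psi_zero (r : ℕ) : psiFun r 0 = 0 := by
  unfold psiFun
  rw [add_zero, Real.log_one, Finset.sum_eq_zero, sub_zero, mul_zero]
  intro m hm
  have hm1 : 1 ≤ m := (Finset.mem_Icc.mp hm).1
  rw [zero_pow (by omega)]
  ring

lemma psi_eq_integral (r : ℕ) {t : ℝ} (ht : 0 ≤ t) :
    psiFun r t = ∫ s in (0:ℝ)..t, s ^ r / (1 + s) := by
  have key : ∫ s in (0:ℝ)..t, s ^ r / (1 + s) = psiFun r t - psiFun r 0 := by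
    apply intervalIntegral.integral_eq_sub_of_hasDerivAt
    · intro x hx
      rw [Set.uIcc_of_le ht] at hx
      exact psi_hasDerivAt r (by linarith [hx.1])
    · apply ContinuousOn.intervalIntegrable
      apply ContinuousOn.div
      · exact (continuous_pow r).continuousOn
      · exact (continuous_const.add continuous_id).continuousOn
      · intro x hx
        rw [Set.uIcc_of_le ht] at hx
        have : (0:ℝ) ≤ x := hx.1
        positivity
  rw [key, psi_zero, sub_zero]

lemma psi_pos (r : ℕ) {t : ℝ} (ht : 0 < t) : 0 < psiFun r t := by
  rw [psi_eq_integral r ht.le]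
  apply intervalIntegral.intervalIntegral_pos_of_pos_on
  · apply ContinuousOn.intervalIntegrable
    apply ContinuousOn.div
    · exact (continuous_pow r).continuousOn
    · exact (continuous_const.add continuous_id).continuousOn
    · intro x hx
      rw [Set.uIcc_of_le ht.le] at hx
      have : (0:ℝ) ≤ x := hx.1
      positivity
  · intro x hx
    have h1 : 0 < x := hx.1
    positivity
  · exact ht

lemma psi_le (r : ℕ) {q t : ℝ} (hq0 : 0 < q) (hql : (r : ℝ) ≤ q) (hqu : q ≤ r + 1)
    (ht : 0 < t) : psiFun r t ≤ t ^ q / q := by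
  rw [psi_eq_integral r ht.le]
  have h1 : ∫ s in (0:ℝ)..t, s ^ (q - 1) = t ^ q / q := by
    rw [integral_rpow (Or.inl (by linarith))]
    rw [Real.zero_rpow (by linarith), sub_zero, sub_add_cancel]
  rw [← h1]
  rw [intervalIntegral.integral_of_le ht.le, intervalIntegral.integral_of_le ht.le]
  apply setIntegral_mono_on
  · have hc : ContinuousOn (fun s : ℝ => s ^ r / (1 + s)) (Set.Icc 0 t) := by
      apply ContinuousOn.div
      · exact (continuous_pow r).continuousOn
      · exact (continuous_const.add continuous_id).continuousOn
      · intro x hx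
        have : (0:ℝ) ≤ x := hx.1
        positivity
    exact (hc.integrableOn_compact isCompact_Icc).mono_set Set.Ioc_subset_Icc_self
  · exact (intervalIntegral.intervalIntegrable_rpow' (by linarith)).1
  · exact measurableSet_Ioc
  · intro x hx
    have hx0 : 0 < x := hx.1
    rw [div_le_iff₀ (by positivity)]
    have hxr : x ^ r = x ^ (r : ℝ) := (Real.rpow_natCast x r).symm
    rw [hxr]
    have key : x ^ (r : ℝ) ≤ x ^ (q - 1) + x ^ q := by
      rcases le_total x 1 with hx1 | hx1
      · have : x ^ (r : ℝ) ≤ x ^ (q - 1) :=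
          Real.rpow_le_rpow_of_exponent_ge hx0 hx1 (by linarith)
        have h2 : 0 ≤ x ^ q := Real.rpow_nonneg hx0.le q
        linarith
      · have : x ^ (r : ℝ) ≤ x ^ q := Real.rpow_le_rpow_of_exponent_le hx1 hql
        have h2 : 0 ≤ x ^ (q - 1) := Real.rpow_nonneg hx0.le _
        linarith
    calc x ^ (r : ℝ) ≤ x ^ (q - 1) + x ^ q := key
      _ = x ^ (q - 1) * (1 + x) := by
          rw [mul_add, mul_one]
          congr 1
          rw [← Real.rpow_add_one hx0.ne' (q - 1), sub_add_cancel]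

lemma psi_continuousOn (r : ℕ) : ContinuousOn (psiFun r) (Set.Ioi (0:ℝ)) := by
  intro t ht
  apply ContinuousAt.continuousWithinAt
  unfold psiFun
  apply ContinuousAt.mul continuousAt_const
  apply ContinuousAt.sub
  · exact (Real.continuousAt_log (by simp at ht; positivity)).comp
      ((continuous_const.add continuous_id).continuousAt)
  · exact (continuous_finset_sum _ (fun m _ => by fun_prop)).continuousAt

theorem stmt_4 (r : ℕ) (p : ℝ) (h1 : (r : ℝ) < p) (h2 : p < r + 1) :
    MeasureTheory.IntegrableOn (fun t : ℝ => psiFun r t * t ^ (-p - 1)) (Set.Ioi 0) ∧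
    0 < ∫ t in Set.Ioi (0 : ℝ), psiFun r t * t ^ (-p - 1) ∧
    ∀ a : ℝ, 0 < a →
      a ^ p = (∫ t in Set.Ioi (0 : ℝ), psiFun r t * t ^ (-p - 1))⁻¹ *
        ∫ t in Set.Ioi (0 : ℝ), psiFun r (a * t) * t ^ (-p - 1) := by
  have hp0 : 0 < p := lt_of_le_of_lt (Nat.cast_nonneg r) h1
  set f : ℝ → ℝ := fun t => psiFun r t * t ^ (-p - 1) with hf
  -- measurability
  have hcont : ContinuousOn f (Set.Ioi (0:ℝ)) := by
    apply (psi_continuousOn r).mul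
    intro t ht
    exact (Real.continuousAt_rpow_const t _ (Or.inl (ne_of_gt ht))).continuousWithinAt
  have hmeas1 : AEStronglyMeasurable f (volume.restrict (Set.Ioc (0:ℝ) 1)) :=
    (hcont.mono Set.Ioc_subset_Ioi_self).aestronglyMeasurable measurableSet_Ioc
  have hmeas2 : AEStronglyMeasurable f (volume.restrict (Set.Ioi (1:ℝ))) :=
    (hcont.mono (fun x (hx : x ∈ Set.Ioi (1:ℝ)) => Set.mem_Ioi.mpr (lt_trans one_pos (Set.mem_Ioi.mp hx)))).aestronglyMeasurable measurableSet_Ioi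
  have hfnn : ∀ t : ℝ, 0 < t → 0 < f t := by
    intro t ht
    exact mul_pos (psi_pos r ht) (Real.rpow_pos_of_pos ht _)
  -- integrability near 0
  have hint1 : IntegrableOn f (Set.Ioc (0:ℝ) 1) := by
    apply Integrable.mono' (g := fun t => t ^ ((r : ℝ) - p) / (r + 1))
      (((intervalIntegral.intervalIntegrable_rpow'
        (r := (r : ℝ) - p) (by linarith)).1).div_const (r + 1)) hmeas1
    filter_upwards [ae_restrict_mem measurableSet_Ioc] with t ht
    rw [Real.norm_of_nonneg (hfnn t ht.1).le]
    have hb : psiFun r t ≤ t ^ ((r : ℝ) + 1) / ((r : ℝ) + 1) := by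
      have := psi_le r (q := (r : ℝ) + 1) (by positivity) (by linarith) le_rfl ht.1
      simpa using this
    have htp : (0:ℝ) < t ^ (-p - 1) := Real.rpow_pos_of_pos ht.1 _
    calc psiFun r t * t ^ (-p - 1)
        ≤ (t ^ ((r : ℝ) + 1) / ((r : ℝ) + 1)) * t ^ (-p - 1) := by
          apply mul_le_mul_of_nonneg_right hb htp.le
      _ = t ^ ((r : ℝ) - p) / ((r : ℝ) + 1) := by
          rw [div_mul_eq_mul_div, ← Real.rpow_add ht.1]
          ring_nf
  -- integrability near ∞
  have hq0 : 0 < ((r : ℝ) + p) / 2 := by positivity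
  have hint2 : IntegrableOn f (Set.Ioi (1:ℝ)) := by
    apply Integrable.mono' (g := fun t => t ^ (((r : ℝ) + p) / 2 - p - 1) / (((r : ℝ) + p) / 2))
      ((integrableOn_Ioi_rpow_of_lt (by linarith) one_pos).div_const _) hmeas2
    filter_upwards [ae_restrict_mem measurableSet_Ioi] with t ht
    have ht0 : (0:ℝ) < t := lt_trans one_pos ht
    rw [Real.norm_of_nonneg (hfnn t ht0).le]
    have hb : psiFun r t ≤ t ^ (((r : ℝ) + p) / 2) / (((r : ℝ) + p) / 2) :=
      psi_le r hq0 (by linarith) (by linarith) ht0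
    have htp : (0:ℝ) < t ^ (-p - 1) := Real.rpow_pos_of_pos ht0 _
    calc psiFun r t * t ^ (-p - 1)
        ≤ (t ^ (((r : ℝ) + p) / 2) / (((r : ℝ) + p) / 2)) * t ^ (-p - 1) :=
          mul_le_mul_of_nonneg_right hb htp.le
      _ = t ^ (((r : ℝ) + p) / 2 - p - 1) / (((r : ℝ) + p) / 2) := by
          rw [div_mul_eq_mul_div, ← Real.rpow_add ht0]
          ring_nf
  have hI : IntegrableOn f (Set.Ioi (0:ℝ)) := by
    have := hint1.union hint2
    rwa [Set.Ioc_union_Ioi_eq_Ioi (zero_le_one)] at this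
  -- positivity
  have hpos : 0 < ∫ t in Set.Ioi (0:ℝ), f t := by
    rw [setIntegral_pos_iff_support_of_nonneg_ae ?_ hI]
    · apply lt_of_lt_of_le _ (measure_mono (s := Set.Ioi (0:ℝ)) ?_)
      · rw [Real.volume_Ioi]; exact ENNReal.zero_lt_top
      · intro x hx
        exact ⟨ne_of_gt (hfnn x hx), hx⟩
    · filter_upwards [ae_restrict_mem measurableSet_Ioi] with t ht
      exact (hfnn t ht).le
  refine ⟨hI, hpos, ?_⟩
  intro a ha
  have key : (∫ t in Set.Ioi (0:ℝ), psiFun r (a * t) * t ^ (-p - 1))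
      = a ^ p * ∫ t in Set.Ioi (0:ℝ), f t := by
    have step1 : ∀ t ∈ Set.Ioi (0:ℝ),
        psiFun r (a * t) * t ^ (-p - 1) = a ^ (p + 1) * f (a * t) := by
      intro t ht
      have ht0 : (0:ℝ) < t := ht
      have hkey : a ^ (p + 1) * (a * t) ^ (-p - 1) = t ^ (-p - 1) := by
        rw [Real.mul_rpow ha.le ht0.le, ← mul_assoc, ← Real.rpow_add ha,
          show p + 1 + (-p - 1) = 0 by ring, Real.rpow_zero, one_mul]
      rw [hf]
      simp only
      rw [← hkey]
      ring
    rw [setIntegral_congr_fun measurableSet_Ioi step1, integral_const_mul]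
    rw [MeasureTheory.integral_comp_mul_left_Ioi f 0 ha, mul_zero]
    rw [smul_eq_mul, ← mul_assoc]
    congr 1
    rw [← Real.rpow_neg_one a, ← Real.rpow_add ha]
    ring_nf
  rw [key, mul_comm (a ^ p), ← mul_assoc, inv_mul_cancel₀ (ne_of_gt hpos), one_mul]
end

section
/- Fix integers r ≥ 0, k ≥ 1 and n ≥ 1. Then G_{k,r}, regarded as a polynomial in the n variables x_1,…,x_n (with rational coefficients), is a symmetric polynomial and every coefficient of every monomial in G_{k,r} is nonnegative. -/
open scoped BigOperators

/-- `exp F = Σ_{j≥0} F^j / j!` for a formal power series `F` (intended for `F` with zero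
constant term; the defining sum is truncated at order `k` when extracting the `k`-th
coefficient, which agrees with `Σ_{j≥0} F^j / j!` whenever `F` has zero constant term). -/
noncomputable def expPS {R : Type*} [CommRing R] [Algebra ℚ R] (F : PowerSeries R) :
    PowerSeries R :=
  PowerSeries.mk fun k =>
    PowerSeries.coeff k (∑ j ∈ Finset.range (k + 1), (Nat.factorial j : ℚ)⁻¹ • F ^ j)

/-- The generating function
`g_r(x,t) = (Π_i (1 + x_i t)) · exp(-Σ_i Q_r(x_i t) + Q_r^-(t Σ_i x_i))`,
as a formal power series in `t` over `ℚ[x_1,…,x_n]`, where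
`Q_r(s) = Σ_{m=1}^r (-1)^(m-1) s^m/m` and `Q_r^-(s) = Σ_{odd m ≤ r} s^m/m`. -/
noncomputable def gSeries (n r : ℕ) : PowerSeries (MvPolynomial (Fin n) ℚ) :=
  (∏ i, (1 + PowerSeries.C (MvPolynomial.X i : MvPolynomial (Fin n) ℚ) * PowerSeries.X)) *
    expPS (PowerSeries.mk fun m =>
      if 1 ≤ m ∧ m ≤ r then
        (-((-1 : ℚ) ^ (m - 1) * (m : ℚ)⁻¹)) • ∑ i, MvPolynomial.X i ^ m
          + (if Odd m then ((m : ℚ)⁻¹) • (∑ i, MvPolynomial.X i) ^ m else 0)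
      else 0)

/-- `G_{k,r}` as a polynomial in `x_1,…,x_n` over `ℚ`: the coefficient of `t^k` in
`g_r(x,t)`. -/
noncomputable def Gpoly (n r k : ℕ) : MvPolynomial (Fin n) ℚ :=
  PowerSeries.coeff k (gSeries n r)

/-- `G_{k,r}(x)` for a real vector `x`. -/
noncomputable def GReal {n : ℕ} (r k : ℕ) (x : Fin n → ℝ) : ℝ :=
  MvPolynomial.aeval x (Gpoly n r k)

section Aux

variable {n : ℕ}

/-- All coefficients nonnegative. -/
def NN (p : MvPolynomial (Fin n) ℚ) : Prop := ∀ m, 0 ≤ MvPolynomial.coeff m p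

lemma NN_zero : NN (0 : MvPolynomial (Fin n) ℚ) := fun m => by simp

lemma NN_one : NN (1 : MvPolynomial (Fin n) ℚ) := fun m => by
  rw [MvPolynomial.coeff_one]; split <;> norm_num

lemma NN_X (i : Fin n) : NN (MvPolynomial.X i : MvPolynomial (Fin n) ℚ) := fun m => by
  rw [MvPolynomial.coeff_X']; split <;> norm_num

lemma NN_add {p q : MvPolynomial (Fin n) ℚ} (hp : NN p) (hq : NN q) : NN (p + q) := fun m => by
  rw [MvPolynomial.coeff_add]; exact add_nonneg (hp m) (hq m)

lemma NN_mul {p q : MvPolynomial (Fin n) ℚ} (hp : NN p) (hq : NN q) : NN (p * q) := fun m => by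
  rw [MvPolynomial.coeff_mul]
  exact Finset.sum_nonneg fun x _ => mul_nonneg (hp _) (hq _)

lemma NN_smul {c : ℚ} (hc : 0 ≤ c) {p : MvPolynomial (Fin n) ℚ} (hp : NN p) : NN (c • p) :=
  fun m => by
    rw [MvPolynomial.coeff_smul, smul_eq_mul]; exact mul_nonneg hc (hp m)

lemma NN_sum {α : Type*} (s : Finset α) (f : α → MvPolynomial (Fin n) ℚ)
    (h : ∀ a ∈ s, NN (f a)) : NN (∑ a ∈ s, f a) := fun m => by
  rw [MvPolynomial.coeff_sum]
  exact Finset.sum_nonneg fun a ha => h a ha m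

lemma NN_pow {p : MvPolynomial (Fin n) ℚ} (hp : NN p) (j : ℕ) : NN (p ^ j) := by
  induction j with
  | zero => simpa using NN_one
  | succ j ih => rw [pow_succ]; exact NN_mul ih hp

/-- Key positivity: `p₁^m - p_m` has nonnegative coefficients. -/
lemma NN_key (m : ℕ) (hm : 1 ≤ m) :
    NN ((∑ i : Fin n, MvPolynomial.X i) ^ m
        - ∑ i : Fin n, (MvPolynomial.X i : MvPolynomial (Fin n) ℚ) ^ m) := by
  induction m with
  | zero => omega
  | succ m ih =>
    rcases Nat.lt_or_ge m 1 with hm1 | hm1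
    · interval_cases m
      simpa using NN_zero
    · have key : (∑ i : Fin n, MvPolynomial.X i) ^ (m + 1)
          - ∑ i : Fin n, (MvPolynomial.X i : MvPolynomial (Fin n) ℚ) ^ (m + 1)
          = (∑ i : Fin n, MvPolynomial.X i)
              * ((∑ i : Fin n, MvPolynomial.X i) ^ m - ∑ i : Fin n, MvPolynomial.X i ^ m)
            + ((∑ i : Fin n, MvPolynomial.X i) * (∑ i : Fin n, MvPolynomial.X i ^ m)
               - ∑ i : Fin n, MvPolynomial.X i ^ (m + 1)) := by ring
      rw [key]
      have h2 : (∑ i : Fin n, MvPolynomial.X i)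
            * (∑ i : Fin n, (MvPolynomial.X i : MvPolynomial (Fin n) ℚ) ^ m)
            - ∑ i : Fin n, MvPolynomial.X i ^ (m + 1)
          = ∑ j : Fin n, ∑ i ∈ Finset.univ.erase j,
              MvPolynomial.X i * (MvPolynomial.X j : MvPolynomial (Fin n) ℚ) ^ m := by
        rw [Finset.mul_sum, ← Finset.sum_sub_distrib]
        refine Finset.sum_congr rfl fun j _ => ?_
        rw [Finset.sum_mul, ← Finset.add_sum_erase _ (fun i => MvPolynomial.X i *
              (MvPolynomial.X j : MvPolynomial (Fin n) ℚ) ^ m) (Finset.mem_univ j)]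
        rw [pow_succ']
        ring
      rw [h2]
      refine NN_add (NN_mul (NN_sum _ _ fun i _ => NN_X i) (ih hm1)) ?_
      exact NN_sum _ _ fun j _ => NN_sum _ _ fun i _ => NN_mul (NN_X i) (NN_pow (NN_X j) m)

/-- Nonnegativity of all coefficients of a power series. -/
def SNN (f : PowerSeries (MvPolynomial (Fin n) ℚ)) : Prop :=
  ∀ k, NN (PowerSeries.coeff k f)

lemma SNN_one : SNN (1 : PowerSeries (MvPolynomial (Fin n) ℚ)) := fun k => by
  rw [PowerSeries.coeff_one]
  split
  · exact NN_one
  · exact NN_zero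

lemma SNN_mul {f g : PowerSeries (MvPolynomial (Fin n) ℚ)} (hf : SNN f) (hg : SNN g) :
    SNN (f * g) := fun k => by
  rw [PowerSeries.coeff_mul]
  exact NN_sum _ _ fun x _ => NN_mul (hf _) (hg _)

lemma SNN_pow {f : PowerSeries (MvPolynomial (Fin n) ℚ)} (hf : SNN f) (j : ℕ) : SNN (f ^ j) := by
  induction j with
  | zero => simpa using SNN_one
  | succ j ih => rw [pow_succ]; exact SNN_mul ih hf

lemma SNN_prod {α : Type*} (s : Finset α) (f : α → PowerSeries (MvPolynomial (Fin n) ℚ))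
    (h : ∀ a ∈ s, SNN (f a)) : SNN (∏ a ∈ s, f a) := by
  classical
  induction s using Finset.induction with
  | empty => simpa using SNN_one
  | insert _ _ hx ih =>
    rw [Finset.prod_insert hx]
    exact SNN_mul (h _ (Finset.mem_insert_self _ _))
      (ih fun a ha => h a (Finset.mem_insert_of_mem ha))

/-- The exponent series has nonnegative coefficients. -/
lemma SNN_F (r : ℕ) :
    SNN (PowerSeries.mk fun m =>
      if 1 ≤ m ∧ m ≤ r then
        (-((-1 : ℚ) ^ (m - 1) * (m : ℚ)⁻¹)) • ∑ i : Fin n, MvPolynomial.X i ^ m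
          + (if Odd m then ((m : ℚ)⁻¹) • (∑ i : Fin n, MvPolynomial.X i) ^ m else 0)
      else 0) := by
  intro m
  rw [PowerSeries.coeff_mk]
  split
  · next hmr =>
    obtain ⟨hm1, _⟩ := hmr
    by_cases hodd : Odd m
    · rw [if_pos hodd]
      have he : Even (m - 1) := by
        rcases hodd with ⟨t, ht⟩
        exact ⟨t, by omega⟩
      rw [he.neg_one_pow]
      have : (-((1 : ℚ) * (m : ℚ)⁻¹)) • (∑ i : Fin n, (MvPolynomial.X i :
              MvPolynomial (Fin n) ℚ) ^ m)
            + ((m : ℚ)⁻¹) • (∑ i : Fin n, (MvPolynomial.X i : MvPolynomial (Fin n) ℚ)) ^ m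
          = ((m : ℚ)⁻¹) • ((∑ i : Fin n, (MvPolynomial.X i : MvPolynomial (Fin n) ℚ)) ^ m
              - ∑ i : Fin n, (MvPolynomial.X i : MvPolynomial (Fin n) ℚ) ^ m) := by
        module
      rw [this]
      exact NN_smul (by positivity) (NN_key m hm1)
    · rw [if_neg hodd]
      have ho : Odd (m - 1) := by
        rcases Nat.even_or_odd m with he | ho
        · rcases he with ⟨t, ht⟩
          exact ⟨t - 1, by omega⟩
        · exact absurd ho hodd
      rw [ho.neg_one_pow, add_zero, neg_mul, neg_neg, one_mul]
      exact NN_smul (by positivity) (NN_sum _ _ fun i _ => NN_pow (NN_X i) m)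
  · exact NN_zero

lemma SNN_expPS {F : PowerSeries (MvPolynomial (Fin n) ℚ)} (hF : SNN F) : SNN (expPS F) := by
  intro k
  rw [expPS, PowerSeries.coeff_mk, map_sum]
  refine NN_sum _ _ fun j _ => ?_
  rw [PowerSeries.coeff_smul]
  exact NN_smul (by positivity) (SNN_pow hF j _)

lemma SNN_gSeries (r : ℕ) : SNN (gSeries n r) := by
  refine SNN_mul (SNN_prod _ _ fun i _ => ?_) (SNN_expPS (SNN_F r))
  intro k
  rw [map_add, PowerSeries.coeff_one, PowerSeries.coeff_C_mul, PowerSeries.coeff_X]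
  refine NN_add ?_ ?_
  · split
    · exact NN_one
    · exact NN_zero
  · split
    · simpa using NN_X i
    · simpa using NN_zero

/-- `expPS` commutes with coefficientwise application of a `ℚ`-algebra homomorphism. -/
lemma map_expPS {A B : Type*} [CommRing A] [CommRing B] [Algebra ℚ A] [Algebra ℚ B]
    (f : A →ₐ[ℚ] B) (F : PowerSeries A) :
    PowerSeries.map (f : A →+* B) (expPS F) = expPS (PowerSeries.map (f : A →+* B) F) := by
  ext k
  rw [PowerSeries.coeff_map, expPS, expPS, PowerSeries.coeff_mk, PowerSeries.coeff_mk,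
    map_sum, map_sum, map_sum]
  refine Finset.sum_congr rfl fun j _ => ?_
  rw [PowerSeries.coeff_smul, PowerSeries.coeff_smul, RingHom.coe_coe, map_smul, ← map_pow,
    PowerSeries.coeff_map]
  simp

lemma map_gSeries (n r : ℕ) (σ : Equiv.Perm (Fin n)) :
    PowerSeries.map ((MvPolynomial.rename (σ : Fin n → Fin n) :
        MvPolynomial (Fin n) ℚ →ₐ[ℚ] MvPolynomial (Fin n) ℚ) :
        MvPolynomial (Fin n) ℚ →+* MvPolynomial (Fin n) ℚ) (gSeries n r) = gSeries n r := by
  set f := ((MvPolynomial.rename (σ : Fin n → Fin n) :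
      MvPolynomial (Fin n) ℚ →ₐ[ℚ] MvPolynomial (Fin n) ℚ) :
      MvPolynomial (Fin n) ℚ →+* MvPolynomial (Fin n) ℚ) with hf
  rw [gSeries, map_mul]
  congr 1
  · rw [map_prod]
    have : ∀ i : Fin n,
        (PowerSeries.map f)
          (1 + PowerSeries.C (MvPolynomial.X i : MvPolynomial (Fin n) ℚ) * PowerSeries.X)
        = 1 + PowerSeries.C (MvPolynomial.X (σ i) : MvPolynomial (Fin n) ℚ) * PowerSeries.X := by
      intro i
      rw [map_add, map_one, map_mul, PowerSeries.map_C, PowerSeries.map_X]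
      simp [hf]
    rw [Finset.prod_congr rfl fun i _ => this i]
    exact Equiv.prod_comp σ fun i =>
      1 + PowerSeries.C (MvPolynomial.X i : MvPolynomial (Fin n) ℚ) * PowerSeries.X
  · rw [map_expPS]
    refine congrArg expPS ?_
    apply PowerSeries.ext
    intro m
    rw [PowerSeries.coeff_map, PowerSeries.coeff_mk]
    show (MvPolynomial.rename (σ : Fin n → Fin n)) _ = _
    set g := (MvPolynomial.rename (σ : Fin n → Fin n) :
      MvPolynomial (Fin n) ℚ →ₐ[ℚ] MvPolynomial (Fin n) ℚ) with hg
    have hsum : g (∑ i : Fin n, MvPolynomial.X i ^ m) = ∑ i : Fin n, MvPolynomial.X i ^ m := by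
      rw [map_sum]
      simp only [map_pow, hg, MvPolynomial.rename_X]
      exact Equiv.sum_comp σ fun i => (MvPolynomial.X i : MvPolynomial (Fin n) ℚ) ^ m
    have hsum1 : g (∑ i : Fin n, MvPolynomial.X i) = ∑ i : Fin n, MvPolynomial.X i := by
      rw [map_sum]
      simp only [hg, MvPolynomial.rename_X]
      exact Equiv.sum_comp σ fun i => (MvPolynomial.X i : MvPolynomial (Fin n) ℚ)
    split
    · rw [map_add]
      congr 1
      · rw [map_smul, hsum]
      · rw [apply_ite g, map_zero, map_smul, map_pow, hsum1]
    · exact map_zero g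

end Aux

theorem stmt_7 (r k n : ℕ) (hk : 1 ≤ k) (hn : 1 ≤ n) :
    MvPolynomial.IsSymmetric (Gpoly n r k) ∧
    ∀ m : (Fin n) →₀ ℕ, 0 ≤ MvPolynomial.coeff m (Gpoly n r k) := by
  constructor
  · intro σ
    have := map_gSeries n r σ
    calc MvPolynomial.rename (σ : Fin n → Fin n) (Gpoly n r k)
        = PowerSeries.coeff k (PowerSeries.map ((MvPolynomial.rename (σ : Fin n → Fin n) :
            MvPolynomial (Fin n) ℚ →ₐ[ℚ] MvPolynomial (Fin n) ℚ) :
            MvPolynomial (Fin n) ℚ →+* MvPolynomial (Fin n) ℚ) (gSeries n r)) := by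
          rw [PowerSeries.coeff_map]; rfl
      _ = Gpoly n r k := by rw [this]; rfl
  · exact SNN_gSeries r k
end

section
/- Let n ≥ 1, let x, y ∈ [0,∞)^n, and fix an integer r ≥ 1. If Σ_{i=1}^n φ_r(x_i t) ≥ Σ_{i=1}^n φ_r(y_i t) for all real t > 0, then ‖x‖_p ≥ ‖y‖_p for every real p with r ≤ p ≤ 2r. -/
open scoped BigOperators

/-- `φ_r(t) = t^r - log(1 + t^r)`. -/
noncomputable def phiFun (r : ℕ) (t : ℝ) : ℝ :=
  t ^ r - Real.log (1 + t ^ r)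

open MeasureTheory Set
open scoped ENNReal

lemma phi_nonneg {r : ℕ} {t : ℝ} (ht : 0 ≤ t) : 0 ≤ phiFun r t := by
  have h1 : 0 ≤ t ^ r := pow_nonneg ht r
  have h2 := Real.log_le_sub_one_of_pos (x := 1 + t ^ r) (by linarith)
  simp only [phiFun]; linarith

lemma phi_pos {r : ℕ} (hr : 1 ≤ r) {t : ℝ} (ht : 0 < t) : 0 < phiFun r t := by
  have h1 : 0 < t ^ r := pow_pos ht r
  have h2 := Real.log_lt_sub_one_of_pos (x := 1 + t ^ r) (by linarith) (by linarith)
  simp only [phiFun]; linarith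

lemma phi_le_pow {r : ℕ} {t : ℝ} (ht : 0 ≤ t) : phiFun r t ≤ t ^ r := by
  have h1 : 0 ≤ t ^ r := pow_nonneg ht r
  have h2 : 0 ≤ Real.log (1 + t ^ r) := Real.log_nonneg (by linarith)
  simp only [phiFun]; linarith

lemma phi_le_sq {r : ℕ} {t : ℝ} (ht : 0 ≤ t) : phiFun r t ≤ (t ^ r) ^ 2 := by
  set v := t ^ r with hv
  have hv0 : 0 ≤ v := pow_nonneg ht r
  have hv1 : (0:ℝ) < 1 + v := by linarith
  have h2 := Real.one_sub_inv_le_log_of_pos hv1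
  have hinv : (1 + v) * (1 + v)⁻¹ = 1 := mul_inv_cancel₀ hv1.ne'
  have hinv0 : 0 ≤ (1 + v)⁻¹ := inv_nonneg.mpr hv1.le
  simp only [phiFun, ← hv]
  nlinarith [pow_nonneg hv0 3, sq_nonneg v]

lemma phi_continuousOn (r : ℕ) : ContinuousOn (phiFun r) (Ici 0) := by
  apply ContinuousOn.sub (continuousOn_pow r)
  apply ContinuousOn.log (by fun_prop)
  intro t ht
  have : 0 ≤ t ^ r := pow_nonneg ht r
  positivity

lemma phi_zero {r : ℕ} (hr : 1 ≤ r) : phiFun r 0 = 0 := by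
  simp [phiFun, zero_pow (Nat.one_le_iff_ne_zero.mp hr)]

lemma weight_meas {r : ℕ} (p : ℝ) (a : ℝ) (ha : 0 ≤ a) :
    AEStronglyMeasurable (fun s : ℝ => phiFun r (a * s) * s ^ (-p - 1))
      (volume.restrict (Ioi (0:ℝ))) := by
  apply ContinuousOn.aestronglyMeasurable ?_ measurableSet_Ioi
  apply ContinuousOn.mul
  · apply (phi_continuousOn r).comp (continuous_const.mul continuous_id).continuousOn
    intro s hs
    exact mul_nonneg ha (le_of_lt hs)
  · intro s hs
    exact (Real.continuousAt_rpow_const s _ (Or.inl (ne_of_gt hs))).continuousWithinAt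

lemma integrable_phi_weight {r : ℕ} (hr : 1 ≤ r) {p : ℝ} (h1 : (r : ℝ) < p) (h2 : p < 2 * r)
    {a : ℝ} (ha : 0 ≤ a) :
    IntegrableOn (fun s : ℝ => phiFun r (a * s) * s ^ (-p - 1)) (Ioi 0) := by
  have key : Ioc (0:ℝ) 1 ∪ Ioi 1 = Ioi 0 := Ioc_union_Ioi_eq_Ioi zero_le_one
  rw [← key]
  apply IntegrableOn.union
  · -- near 0 : dominate by a^(2r) * s^(2r - p - 1)
    have hg : IntegrableOn (fun s : ℝ => a ^ (2*r) * s ^ (2 * (r:ℝ) - p - 1)) (Ioc (0:ℝ) 1) := by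
      apply Integrable.const_mul
      have : IntegrableOn (fun s : ℝ => s ^ (2 * (r:ℝ) - p - 1)) (Ioo (0:ℝ) 1) :=
        (intervalIntegral.integrableOn_Ioo_rpow_iff one_pos).mpr (by linarith)
      exact (integrableOn_Ioc_iff_integrableOn_Ioo).mpr this
    apply Integrable.mono' hg ((weight_meas p a ha).mono_measure
      (Measure.restrict_mono Ioc_subset_Ioi_self le_rfl))
    rw [ae_restrict_iff' measurableSet_Ioc]
    filter_upwards with s hs
    obtain ⟨hs0, hs1⟩ := hs
    have has : 0 ≤ a * s := mul_nonneg ha hs0.le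
    have hw0 : (0:ℝ) ≤ s ^ (-p - 1) := Real.rpow_nonneg hs0.le _
    have hf0 : 0 ≤ phiFun r (a * s) * s ^ (-p - 1) :=
      mul_nonneg (phi_nonneg has) hw0
    rw [Real.norm_of_nonneg hf0]
    have hb : phiFun r (a * s) ≤ a ^ (2*r) * s ^ (2*r : ℕ) := by
      calc phiFun r (a * s) ≤ ((a * s) ^ r) ^ 2 := phi_le_sq has
        _ = a ^ (2*r) * s ^ (2*r : ℕ) := by ring
    calc phiFun r (a * s) * s ^ (-p - 1) ≤ (a ^ (2*r) * s ^ (2*r : ℕ)) * s ^ (-p - 1) :=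
          mul_le_mul_of_nonneg_right hb hw0
      _ = a ^ (2*r) * s ^ (2 * (r:ℝ) - p - 1) := by
          rw [← Real.rpow_natCast s (2*r), mul_assoc, ← Real.rpow_add hs0]
          push_cast
          ring_nf
  · -- near ∞ : dominate by a^r * s^(r - p - 1)
    have hg : IntegrableOn (fun s : ℝ => a ^ r * s ^ ((r:ℝ) - p - 1)) (Ioi (1:ℝ)) :=
      Integrable.const_mul (integrableOn_Ioi_rpow_of_lt (by linarith) one_pos) _
    apply Integrable.mono' hg ((weight_meas p a ha).mono_measure
      (Measure.restrict_mono (Ioi_subset_Ioi zero_le_one) le_rfl))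
    rw [ae_restrict_iff' measurableSet_Ioi]
    filter_upwards with s hs
    have hs0 : (0:ℝ) < s := lt_trans one_pos hs
    have has : 0 ≤ a * s := mul_nonneg ha hs0.le
    have hw0 : (0:ℝ) ≤ s ^ (-p - 1) := Real.rpow_nonneg hs0.le _
    rw [Real.norm_of_nonneg (mul_nonneg (phi_nonneg has) hw0)]
    have hb : phiFun r (a * s) ≤ a ^ r * s ^ (r : ℕ) := by
      calc phiFun r (a * s) ≤ (a * s) ^ r := phi_le_pow has
        _ = a ^ r * s ^ (r : ℕ) := mul_pow a s r
    calc phiFun r (a * s) * s ^ (-p - 1) ≤ (a ^ r * s ^ (r : ℕ)) * s ^ (-p - 1) :=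
          mul_le_mul_of_nonneg_right hb hw0
      _ = a ^ r * s ^ ((r:ℝ) - p - 1) := by
          rw [← Real.rpow_natCast s r, mul_assoc, ← Real.rpow_add hs0]
          ring_nf

lemma integral_phi_scaled {r : ℕ} (hr : 1 ≤ r) {p : ℝ} (hp : 0 < p)
    {a : ℝ} (ha : 0 ≤ a) :
    ∫ s in Ioi (0:ℝ), phiFun r (a * s) * s ^ (-p - 1)
      = a ^ p * ∫ s in Ioi (0:ℝ), phiFun r s * s ^ (-p - 1) := by
  rcases eq_or_lt_of_le ha with rfl | ha'
  · simp [phi_zero hr, Real.zero_rpow hp.ne']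
  · set g : ℝ → ℝ := fun u => phiFun r u * (a⁻¹ * u) ^ (-p - 1) with hg
    have hfg : (fun s : ℝ => phiFun r (a * s) * s ^ (-p - 1)) = fun s => g (a * s) := by
      funext s
      simp only [hg]
      rw [← mul_assoc, inv_mul_cancel₀ ha'.ne', one_mul]
    rw [hfg, integral_comp_mul_left_Ioi g 0 ha', mul_zero]
    have hgeq : ∀ u ∈ Ioi (0:ℝ), g u = a ^ (p+1) * (phiFun r u * u ^ (-p - 1)) := by
      intro u hu
      simp only [hg]
      rw [Real.mul_rpow (inv_nonneg.mpr ha) (le_of_lt hu), ← Real.rpow_neg_one a,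
        ← Real.rpow_mul ha]
      have hexp : (-1:ℝ) * (-p - 1) = p + 1 := by ring
      rw [hexp]
      ring
    rw [setIntegral_congr_fun measurableSet_Ioi hgeq, integral_const_mul, smul_eq_mul,
      ← mul_assoc, ← Real.rpow_neg_one a, ← Real.rpow_add ha']
    norm_num

lemma C_pos {r : ℕ} (hr : 1 ≤ r) {p : ℝ} (h1 : (r : ℝ) < p) (h2 : p < 2 * r) :
    0 < ∫ s in Ioi (0:ℝ), phiFun r s * s ^ (-p - 1) := by
  have hint : IntegrableOn (fun s : ℝ => phiFun r s * s ^ (-p - 1)) (Ioi 0) := by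
    simpa using integrable_phi_weight hr h1 h2 (zero_le_one (α := ℝ))
  refine (setIntegral_pos_iff_support_of_nonneg_ae ?nonneg hint).mpr ?_
  case nonneg =>
    rw [Filter.EventuallyLE, ae_restrict_iff' measurableSet_Ioi]
    filter_upwards with s hs
    exact mul_nonneg (phi_nonneg (le_of_lt hs)) (Real.rpow_nonneg (le_of_lt hs) _)
  · have hsub : Ioi (0:ℝ) ⊆ Function.support (fun s : ℝ => phiFun r s * s ^ (-p - 1)) ∩ Ioi 0 := by
      intro s hs
      refine ⟨?_, hs⟩
      have h1 : 0 < phiFun r s := phi_pos hr hs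
      have h2 : 0 < s ^ (-p - 1) := Real.rpow_pos_of_pos hs _
      exact ne_of_gt (mul_pos h1 h2)
    calc (0:ℝ≥0∞) < volume (Ioi (0:ℝ)) := by simp
      _ ≤ _ := measure_mono hsub

lemma sum_rpow_le {n : ℕ} {x y : Fin n → ℝ} {r : ℕ}
    (hx : ∀ i, 0 ≤ x i) (hy : ∀ i, 0 ≤ y i) (hr : 1 ≤ r)
    (h : ∀ t : ℝ, 0 < t → ∑ i, phiFun r (y i * t) ≤ ∑ i, phiFun r (x i * t))
    {p : ℝ} (h1 : (r : ℝ) < p) (h2 : p < 2 * r) :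
    ∑ i, y i ^ p ≤ ∑ i, x i ^ p := by
  have hp : (0:ℝ) < p := lt_of_le_of_lt (by exact_mod_cast Nat.cast_nonneg r) h1
  set C := ∫ s in Ioi (0:ℝ), phiFun r s * s ^ (-p - 1) with hC
  have hCpos : 0 < C := C_pos hr h1 h2
  have key : C * ∑ i, y i ^ p ≤ C * ∑ i, x i ^ p := by
    have sumform : ∀ z : Fin n → ℝ, (∀ i, 0 ≤ z i) →
        C * ∑ i, z i ^ p = ∫ s in Ioi (0:ℝ), (∑ i, phiFun r (z i * s) * s ^ (-p - 1)) := by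
      intro z hz
      rw [integral_finset_sum _ (fun i _ => integrable_phi_weight hr h1 h2 (hz i))]
      rw [Finset.mul_sum]
      congr 1
      funext i
      rw [integral_phi_scaled hr hp (hz i), mul_comm]
    rw [sumform x hx, sumform y hy]
    apply setIntegral_mono_on
    · exact integrable_finset_sum _ (fun i _ => integrable_phi_weight hr h1 h2 (hy i))
    · exact integrable_finset_sum _ (fun i _ => integrable_phi_weight hr h1 h2 (hx i))
    · exact measurableSet_Ioi
    · intro s hs
      rw [← Finset.sum_mul, ← Finset.sum_mul]
      exact mul_le_mul_of_nonneg_right (h s hs) (Real.rpow_nonneg (le_of_lt hs) _)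
  exact le_of_mul_le_mul_left key hCpos

lemma sum_rpow_cont {n : ℕ} {x : Fin n → ℝ} {r : ℕ} (hr : 1 ≤ r) :
    ContinuousOn (fun q : ℝ => ∑ i, x i ^ q) (Icc (r:ℝ) (2 * r)) := by
  intro q hq
  have hq0 : 0 < q := by
    have h1 : (1:ℝ) ≤ (r:ℝ) := by exact_mod_cast hr
    have := hq.1; linarith
  apply ContinuousAt.continuousWithinAt
  apply tendsto_finset_sum
  intro i _
  have hjoint : ContinuousAt (fun pq : ℝ × ℝ => pq.1 ^ pq.2) (x i, q) :=
    Real.continuousAt_rpow (x i, q) (Or.inr hq0)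
  exact hjoint.comp ((continuous_const.prodMk continuous_id).continuousAt)

theorem stmt_11 (n : ℕ) (hn : 1 ≤ n) (x y : Fin n → ℝ)
    (hx : ∀ i, 0 ≤ x i) (hy : ∀ i, 0 ≤ y i) (r : ℕ) (hr : 1 ≤ r)
    (h : ∀ t : ℝ, 0 < t → ∑ i, phiFun r (y i * t) ≤ ∑ i, phiFun r (x i * t)) :
    ∀ p : ℝ, (r : ℝ) ≤ p → p ≤ 2 * r → pNorm p y ≤ pNorm p x := by
  have hr1 : (1:ℝ) ≤ (r:ℝ) := by exact_mod_cast hr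
  have hlt : (r:ℝ) < 2 * r := by linarith
  have hsum : ∀ p ∈ Icc (r:ℝ) (2 * r), ∑ i, y i ^ p ≤ ∑ i, x i ^ p := by
    have hcl : closure (Ioo (r:ℝ) (2 * r)) = Icc (r:ℝ) (2 * r) := closure_Ioo (ne_of_lt hlt)
    have := le_on_closure (f := fun q : ℝ => ∑ i, y i ^ q) (g := fun q : ℝ => ∑ i, x i ^ q)
      (s := Ioo (r:ℝ) (2 * r))
      (fun q hq => sum_rpow_le hx hy hr h hq.1 hq.2)
      (by rw [hcl]; exact sum_rpow_cont hr)
      (by rw [hcl]; exact sum_rpow_cont hr)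
    rw [hcl] at this
    exact this
  intro p hp1 hp2
  have hp0 : (0:ℝ) < p := lt_of_lt_of_le (by linarith) hp1
  simp only [pNorm, if_neg hp0.ne']
  apply Real.rpow_le_rpow
  · apply mul_nonneg (by positivity)
    exact Finset.sum_nonneg (fun i _ => Real.rpow_nonneg (hy i) p)
  · apply mul_le_mul_of_nonneg_left (hsum p ⟨hp1, hp2⟩) (by positivity)
  · positivity
end
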